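/- arXiv:1709.10119 — 12 statements merged into one kernel-verified Lean document; each statement's English description precedes it below -/
import Mathlib

section
/- For every r > 0 and λ ∈ (0,1), the function f is differentiable at every point p₀ of the open interval (0,1). -/
open scoped BigOperators

/-- `g r lam i x = x · r^i (1−λx)^i / ∏_{j=1}^i (r + j·x)`; for `i = 0` this is `x`. -/
noncomputable def g (r lam : ℝ) (i : ℕ) (x : ℝ) : ℝ :=
  x * r ^ i * (1 - lam * x) ^ i / ∏ j ∈ Finset.Icc 1 i, (r + (j : ℝ) * x)

/-- `f r lam x = Σ_{i=0}^∞ g_i(x)`. -/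
noncomputable def f (r lam : ℝ) (x : ℝ) : ℝ := ∑' i : ℕ, g r lam i x

/-- complex extension of `g`. -/
noncomputable def G (r lam : ℝ) (i : ℕ) (z : ℂ) : ℂ :=
  z * (r : ℂ) ^ i * (1 - (lam : ℂ) * z) ^ i / ∏ j ∈ Finset.Icc 1 i, ((r : ℂ) + (j : ℝ) * z)

theorem stmt1 (r lam : ℝ) (hr : 0 < r) (hlam : lam ∈ Set.Ioo (0:ℝ) 1) :
    ∀ p₀ ∈ Set.Ioo (0:ℝ) 1, DifferentiableAt ℝ (f r lam) p₀ := by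
  rintro p₀ ⟨hp0, hp1⟩
  set a : ℝ := p₀ / 2 with ha_def
  set b : ℝ := (p₀ + 1) / 2 with hb_def
  have ha : 0 < a := by positivity
  have hab : a < p₀ := by simp [ha_def]; linarith
  have hpb : p₀ < b := by simp [hb_def]; linarith
  have hb1 : b < 1 := by simp [hb_def]; linarith
  -- the open set in ℂ
  set S : Set ℂ := Complex.re ⁻¹' Set.Ioo a b ∩ Complex.im ⁻¹' Set.Ioo (-1) 1 with hS_def
  have hSopen : IsOpen S :=
    (isOpen_Ioo.preimage Complex.continuous_re).inter (isOpen_Ioo.preimage Complex.continuous_im)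
  have hp₀S : (p₀ : ℂ) ∈ S := by
    constructor <;> simp [Set.mem_Ioo, hab, hpb]
  -- basic bounds on S
  have hnormz : ∀ z ∈ S, ‖z‖ ≤ 2 := by
    rintro z ⟨hz1, hz2⟩
    have := Complex.norm_le_abs_re_add_abs_im z
    have h1 : |z.re| ≤ 1 := by
      rw [abs_le]; constructor <;> [linarith [hz1.1]; linarith [hz1.2]]
    have h2 : |z.im| ≤ 1 := by
      rw [abs_le]; constructor <;> [linarith [hz2.1]; linarith [hz2.2]]
    calc ‖z‖ = ‖z‖ := rfl
      _ ≤ |z.re| + |z.im| := this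
      _ ≤ 2 := by linarith
  have hden : ∀ z ∈ S, ∀ j : ℕ, j ∈ Finset.Icc 1 (0:ℕ) ∪ Finset.Icc 1 j → True := fun _ _ _ _ => trivial
  have hfac : ∀ z ∈ S, ∀ j : ℕ, r + (j : ℝ) * a ≤ ‖(r : ℂ) + (j : ℝ) * z‖ := by
    rintro z ⟨hz1, _⟩ j
    have : ((r : ℂ) + (j : ℝ) * z).re = r + (j : ℝ) * z.re := by simp
    calc r + (j : ℝ) * a ≤ r + (j : ℝ) * z.re := by
          have : (j : ℝ) * a ≤ (j : ℝ) * z.re :=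
            mul_le_mul_of_nonneg_left (le_of_lt hz1.1) (Nat.cast_nonneg j)
          linarith
      _ = ((r : ℂ) + (j : ℝ) * z).re := this.symm
      _ ≤ ‖((r : ℂ) + (j : ℝ) * z)‖ := Complex.re_le_norm _
  have hfacpos : ∀ j : ℕ, 0 < r + (j : ℝ) * a := fun j => by positivity
  -- the majorant
  set u : ℕ → ℝ := fun i => 2 * (3 * r) ^ i / ∏ j ∈ Finset.Icc 1 i, (r + (j : ℝ) * a) with hu_def
  have hupos : ∀ i, 0 < u i := by
    intro i
    have : 0 < ∏ j ∈ Finset.Icc 1 i, (r + (j : ℝ) * a) :=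
      Finset.prod_pos fun j _ => hfacpos j
    positivity
  have hu : Summable u := by
    apply summable_of_ratio_norm_eventually_le (r := 1/2) (by norm_num)
    rw [Filter.eventually_atTop]
    refine ⟨⌈5 * r / a⌉₊, fun n hn => ?_⟩
    have hprod : ∏ j ∈ Finset.Icc 1 (n+1), (r + (j : ℝ) * a)
        = (∏ j ∈ Finset.Icc 1 n, (r + (j : ℝ) * a)) * (r + ((n+1 : ℕ) : ℝ) * a) :=
      Finset.prod_Icc_succ_top (Nat.le_add_left 1 n) _
    have hPn : 0 < ∏ j ∈ Finset.Icc 1 n, (r + (j : ℝ) * a) :=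
      Finset.prod_pos fun j _ => hfacpos j
    have hnA : 5 * r ≤ ((n+1 : ℕ) : ℝ) * a := by
      have h1 : 5 * r / a ≤ (⌈5 * r / a⌉₊ : ℝ) := Nat.le_ceil _
      have h2 : ((⌈5 * r / a⌉₊ : ℕ) : ℝ) ≤ ((n+1 : ℕ) : ℝ) := by
        exact_mod_cast Nat.le_succ_of_le hn
      have := (div_le_iff₀ ha).mp (h1.trans h2)
      linarith
    have key : u (n+1) = u n * (3 * r / (r + ((n+1 : ℕ) : ℝ) * a)) := by
      simp only [hu_def]
      rw [hprod]
      field_simp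
      ring
    rw [Real.norm_of_nonneg (hupos _).le, Real.norm_of_nonneg (hupos _).le, key]
    have hq : 3 * r / (r + ((n+1 : ℕ) : ℝ) * a) ≤ 1/2 := by
      rw [div_le_div_iff₀ (by positivity) (by norm_num)]
      linarith
    calc u n * (3 * r / (r + ((n+1 : ℕ) : ℝ) * a)) ≤ u n * (1/2) :=
          mul_le_mul_of_nonneg_left hq (hupos n).le
      _ = 1/2 * u n := by ring
  -- bound ‖G i z‖ ≤ u i on S
  have hGle : ∀ (i : ℕ) (z : ℂ), z ∈ S → ‖G r lam i z‖ ≤ u i := by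
    intro i z hz
    have h1mlz : ‖1 - (lam : ℂ) * z‖ ≤ 3 := by
      calc ‖1 - (lam : ℂ) * z‖ ≤ ‖(1 : ℂ)‖ + ‖(lam : ℂ) * z‖ := norm_sub_le _ _
        _ = 1 + lam * ‖z‖ := by
            rw [norm_one, norm_mul, Complex.norm_real, Real.norm_of_nonneg hlam.1.le]
        _ ≤ 1 + 1 * 2 := by
            have := hnormz z hz
            have h2 : lam * ‖z‖ ≤ 1 * 2 :=
              mul_le_mul hlam.2.le this (norm_nonneg _) (by norm_num)
            linarith
        _ = 3 := by norm_num
    have hPz : r ^ 0 = 1 := rfl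
    have hnum : ‖z * (r : ℂ) ^ i * (1 - (lam : ℂ) * z) ^ i‖ ≤ 2 * (3 * r) ^ i := by
      rw [norm_mul, norm_mul, norm_pow, norm_pow, Complex.norm_real,
        Real.norm_of_nonneg hr.le]
      calc ‖z‖ * r ^ i * ‖1 - (lam : ℂ) * z‖ ^ i
          ≤ 2 * r ^ i * 3 ^ i := by
            apply mul_le_mul
            · exact mul_le_mul_of_nonneg_right (hnormz z hz) (by positivity)
            · exact pow_le_pow_left₀ (norm_nonneg _) h1mlz i
            · positivity
            · positivity
        _ = 2 * (3 * r) ^ i := by rw [mul_pow]; ring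
    have hdenle : ∏ j ∈ Finset.Icc 1 i, (r + (j : ℝ) * a)
        ≤ ‖∏ j ∈ Finset.Icc 1 i, ((r : ℂ) + (j : ℝ) * z)‖ := by
      rw [norm_prod]
      exact Finset.prod_le_prod (fun j _ => (hfacpos j).le) (fun j _ => hfac z hz j)
    have hPpos : 0 < ∏ j ∈ Finset.Icc 1 i, (r + (j : ℝ) * a) :=
      Finset.prod_pos fun j _ => hfacpos j
    rw [G, norm_div, hu_def]
    exact div_le_div₀ (by positivity) hnum (hPpos) hdenle
  -- each G i is differentiable on S
  have hGdiff : ∀ i : ℕ, DifferentiableOn ℂ (G r lam i) S := by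
    intro i
    apply DifferentiableOn.div
    · have : Differentiable ℂ fun z : ℂ => z * (r : ℂ) ^ i * (1 - (lam : ℂ) * z) ^ i := by
        fun_prop
      exact this.differentiableOn
    · exact (DifferentiableOn.fun_finsetProd (fun j _ =>
        (by fun_prop)))
    · intro z hz
      apply Finset.prod_ne_zero_iff.mpr
      intro j _ h
      have h1 := hfac z hz j
      have h2 := hfacpos j
      rw [h, norm_zero] at h1
      linarith
  -- the complex sum is differentiable on S
  have hFdiff : DifferentiableOn ℂ (fun z : ℂ => ∑' i : ℕ, G r lam i z) S :=
    Complex.differentiableOn_tsum_of_summable_norm hu hGdiff hSopen hGle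
  have hFat : DifferentiableAt ℂ (fun z : ℂ => ∑' i : ℕ, G r lam i z) (p₀ : ℂ) :=
    (hFdiff.differentiableAt (hSopen.mem_nhds hp₀S))
  -- real function h = re ∘ F ∘ ofReal
  have hhdiff : DifferentiableAt ℝ
      (fun x : ℝ => ((fun z : ℂ => ∑' i : ℕ, G r lam i z) (x : ℂ)).re) p₀ := by
    have h1 : DifferentiableAt ℝ (fun z : ℂ => ∑' i : ℕ, G r lam i z) (p₀ : ℂ) :=
      hFat.restrictScalars ℝ
    have h2 : DifferentiableAt ℝ (fun x : ℝ => (x : ℂ)) p₀ :=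
      Complex.ofRealCLM.differentiableAt
    exact Complex.reCLM.differentiableAt.comp p₀ ((h1.comp p₀ h2))
  -- f agrees with h near p₀
  have hEq : f r lam =ᶠ[nhds p₀] fun x : ℝ =>
      ((fun z : ℂ => ∑' i : ℕ, G r lam i z) (x : ℂ)).re := by
    have hmem : Set.Ioo a b ∈ nhds p₀ := isOpen_Ioo.mem_nhds ⟨hab, hpb⟩
    filter_upwards [hmem] with x hx
    have hxS : (x : ℂ) ∈ S := by
      constructor <;> simp [Set.mem_Ioo, hx.1, hx.2]
    have hGx : ∀ i : ℕ, G r lam i (x : ℂ) = ((g r lam i x : ℝ) : ℂ) := by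
      intro i
      rw [G, g]
      push_cast
      rfl
    have hsum : Summable (fun i : ℕ => G r lam i (x : ℂ)) :=
      hu.of_norm_bounded (fun i => hGle i _ hxS)
    rw [f, Complex.re_tsum hsum]
    congr 1
    ext i
    rw [hGx i, Complex.ofReal_re]
  exact hEq.differentiableAt_iff.mpr hhdiff
end

section
/- For every r > 0 and λ ∈ (0,1), the function f is strictly monotonically increasing on the open interval (0,1): for all 0 < x < y < 1, f(x) < f(y). -/
open scoped BigOperators

lemma g_zero (r lam x : ℝ) : g r lam 0 x = x := by simp [g]

lemma g_succ (r lam : ℝ) (i : ℕ) (x : ℝ) :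
    g r lam (i+1) x = g r lam i x * (r * (1 - lam * x) / (r + ((i:ℝ)+1) * x)) := by
  unfold g
  rw [Finset.prod_Icc_succ_top (by omega : 1 ≤ i+1), div_mul_div_comm]
  push_cast
  ring_nf

lemma g_pos {r lam z : ℝ} (hr : 0 < r) (hz : 0 < z) (hc : 0 < 1 - lam * z) (i : ℕ) :
    0 < g r lam i z := by
  induction i with
  | zero => simpa [g_zero] using hz
  | succ k ih =>
      rw [g_succ]
      have hQ : 0 < r + ((k:ℝ)+1) * z := by positivity
      positivity

lemma g_bound {r lam a b z : ℝ} (hr : 0 < r) (ha : 0 < a) (haz : a ≤ z) (hzb : z ≤ b)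
    (hl0 : 0 ≤ lam) (hc : 0 < 1 - lam * z) (i : ℕ) :
    g r lam i z ≤ b * (r / (r + a)) ^ i := by
  have hz : 0 < z := lt_of_lt_of_le ha haz
  induction i with
  | zero => simpa [g_zero] using hzb
  | succ k ih =>
      rw [g_succ, pow_succ]
      have hQ : 0 < r + ((k:ℝ)+1) * z := by positivity
      have h1 : r * (1 - lam * z) / (r + ((k:ℝ)+1) * z) ≤ r / (r + a) := by
        apply div_le_div₀ (le_of_lt hr) _ (by positivity) _
        · nlinarith [mul_nonneg hl0 hz.le]
        · nlinarith [mul_le_mul_of_nonneg_left haz (by positivity : (0:ℝ) ≤ (k:ℝ)+1)]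
      have hg0 : 0 ≤ g r lam k z := (g_pos hr hz hc k).le
      have h2 : 0 ≤ r * (1 - lam * z) / (r + ((k:ℝ)+1) * z) := div_nonneg (by nlinarith) hQ.le
      calc g r lam k z * (r * (1 - lam * z) / (r + ((k:ℝ)+1) * z))
          ≤ (b * (r/(r+a))^k) * (r/(r+a)) := by
            apply mul_le_mul ih h1 h2
            have hb : 0 < b := lt_of_lt_of_le hz hzb
            positivity
        _ = b * (r/(r+a))^k * (r/(r+a)) := by ring
        _ = b * ((r/(r+a))^k * (r/(r+a))) := by ring

noncomputable def gD (r lam : ℝ) (i : ℕ) (z : ℝ) : ℝ :=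
  g r lam i z * (1/z - ∑ j ∈ Finset.Icc 1 i, (((j:ℝ) + lam*r)/((1 - lam*z)*(r + (j:ℝ)*z))))

lemma g_hasDeriv {r lam z : ℝ} (hr : 0 < r) (hz : 0 < z) (hc : 0 < 1 - lam * z) (i : ℕ) :
    HasDerivAt (g r lam i) (gD r lam i z) z := by
  induction i with
  | zero =>
      have h : g r lam 0 = fun w : ℝ => w := funext fun w => g_zero r lam w
      have hD : gD r lam 0 z = 1 := by
        simp [gD, g_zero]
        field_simp
      rw [h, hD]
      exact hasDerivAt_id z
  | succ k ih =>
      have hQ : 0 < r + ((k:ℝ)+1) * z := by positivity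
      have hfun : g r lam (k+1) = fun w : ℝ =>
          g r lam k w * (r * (1 - lam * w) / (r + ((k:ℝ)+1) * w)) :=
        funext fun w => g_succ r lam k w
      -- derivative of the rational factor
      have hnum : HasDerivAt (fun w : ℝ => r * (1 - lam * w)) (-(r*lam)) z := by
        have := ((hasDerivAt_id z).const_mul lam).const_sub 1
        have h2 := this.const_mul r
        exact h2.congr_deriv (by ring)
      have hden : HasDerivAt (fun w : ℝ => r + ((k:ℝ)+1) * w) ((k:ℝ)+1) z := by
        have := ((hasDerivAt_id z).const_mul ((k:ℝ)+1)).const_add r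
        exact this.congr_deriv (by ring)
      have hdiv := hnum.div hden (ne_of_gt hQ)
      have hmul := ih.mul hdiv
      rw [hfun]
      refine hmul.congr_deriv ?_
      rw [gD, gD, g_succ, Finset.sum_Icc_succ_top (by omega : 1 ≤ k+1)]
      simp only [Pi.div_apply]
      generalize (∑ j ∈ Finset.Icc 1 k, (((j:ℝ) + lam*r)/((1 - lam*z)*(r + (j:ℝ)*z)))) = T
      push_cast
      have key : r * (1 - lam * z) / (r + ((k:ℝ) + 1) * z) * (((k:ℝ) + 1 + lam * r) / ((1 - lam * z) * (r + ((k:ℝ) + 1) * z)))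
          = -((-(r * lam) * (r + ((k:ℝ) + 1) * z) - r * (1 - lam * z) * ((k:ℝ) + 1)) / (r + ((k:ℝ) + 1) * z) ^ 2) := by
        rw [div_mul_div_comm, neg_div', div_eq_div_iff (by positivity) (by positivity)]; ring
      linear_combination (g r lam k z) * key

lemma S_nonneg {r lam z : ℝ} (hr : 0 < r) (hz : 0 < z) (hl0 : 0 ≤ lam)
    (hc : 0 < 1 - lam * z) (i : ℕ) :
    0 ≤ ∑ j ∈ Finset.Icc 1 i, (((j:ℝ) + lam*r)/((1 - lam*z)*(r + (j:ℝ)*z))) := by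
  apply Finset.sum_nonneg
  intro j hj
  have : (0:ℝ) ≤ (j:ℝ) := Nat.cast_nonneg j
  have hd : 0 < (1 - lam*z)*(r + (j:ℝ)*z) := by positivity
  apply div_nonneg _ hd.le
  nlinarith [mul_nonneg hl0 hr.le]

lemma S_le {r lam z cb : ℝ} (hr : 0 < r) (hz : 0 < z) (hl1 : lam ≤ 1)
    (hcb : 0 < cb) (hcbc : cb ≤ 1 - lam * z) (i : ℕ) :
    ∑ j ∈ Finset.Icc 1 i, (((j:ℝ) + lam*r)/((1 - lam*z)*(r + (j:ℝ)*z)))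
      ≤ (i:ℝ) * (((i:ℝ) + r)/(cb*r)) := by
  have hc : 0 < 1 - lam * z := lt_of_lt_of_le hcb hcbc
  have key : ∀ j ∈ Finset.Icc 1 i,
      (((j:ℝ) + lam*r)/((1 - lam*z)*(r + (j:ℝ)*z))) ≤ ((i:ℝ) + r)/(cb*r) := by
    intro j hj
    simp only [Finset.mem_Icc] at hj
    have hji : (j:ℝ) ≤ (i:ℝ) := Nat.cast_le.2 hj.2
    have hj0 : (0:ℝ) ≤ (j:ℝ) := Nat.cast_nonneg j
    apply div_le_div₀ (by positivity) (by nlinarith) (by positivity)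
    nlinarith [mul_nonneg hj0 hz.le]
  calc ∑ j ∈ Finset.Icc 1 i, (((j:ℝ) + lam*r)/((1 - lam*z)*(r + (j:ℝ)*z)))
      ≤ (Finset.Icc 1 i).card • (((i:ℝ) + r)/(cb*r)) := Finset.sum_le_card_nsmul _ _ _ key
    _ = (i:ℝ) * (((i:ℝ) + r)/(cb*r)) := by
        rw [Nat.card_Icc]
        simp [nsmul_eq_mul]

set_option maxHeartbeats 1600000 in
lemma sum_gD_pos {r lam z : ℝ} (hr : 0 < r) (hl0 : 0 < lam) (hl1 : lam < 1)
    (hz0 : 0 < z) (hz1 : z < 1) : 0 < ∑' i, gD r lam i z := by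
  have hc : 0 < 1 - lam * z := by nlinarith
  set q := r / (r + z) with hqdef
  have hq0 : 0 < q := by positivity
  have hq1 : q < 1 := by rw [hqdef, div_lt_one (by positivity)]; linarith
  have hqn : ‖q‖ < 1 := by rw [Real.norm_eq_abs, abs_of_pos hq0]; exact hq1
  have hgpos : ∀ i, 0 < g r lam i z := g_pos hr hz0 hc
  have hgle : ∀ i, g r lam i z ≤ z * q ^ i := g_bound hr hz0 le_rfl le_rfl hl0.le hc
  -- summability facts
  have Sgeo0 : Summable (fun i : ℕ => q ^ i) := summable_geometric_of_lt_one hq0.le hq1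
  have Sgeo1 : Summable (fun i : ℕ => (i:ℝ) * q ^ i) := by
    have := summable_pow_mul_geometric_of_norm_lt_one 1 hqn
    simpa using this
  have Sgeo2 : Summable (fun i : ℕ => (i:ℝ)^2 * q ^ i) :=
    summable_pow_mul_geometric_of_norm_lt_one 2 hqn
  have hsum_g : Summable (fun i => g r lam i z) := by
    apply Summable.of_nonneg_of_le (fun i => (hgpos i).le) hgle (Sgeo0.mul_left z)
  have hb : Summable (fun k : ℕ => ((k:ℝ)+1) * g r lam k z) := by
    apply Summable.of_nonneg_of_le
      (fun k => mul_nonneg (by positivity) (hgpos k).le)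
      (fun k => ?_) ((Sgeo1.mul_left z).add (Sgeo0.mul_left z))
    calc ((k:ℝ)+1) * g r lam k z ≤ ((k:ℝ)+1) * (z * q ^ k) := by
          apply mul_le_mul_of_nonneg_left (hgle k) (by positivity)
      _ = z * ((k:ℝ) * q ^ k) + z * q ^ k := by ring
  -- the subtracted series w
  set S : ℕ → ℝ := fun i =>
    ∑ j ∈ Finset.Icc 1 i, (((j:ℝ) + lam*r)/((1 - lam*z)*(r + (j:ℝ)*z))) with hSdef
  set w : ℕ → ℝ := fun i => g r lam i z * S i with hwdef
  have hS_nonneg : ∀ i, 0 ≤ S i := by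
    intro i
    apply Finset.sum_nonneg
    intro j hj
    have hj0 : (0:ℝ) ≤ (j:ℝ) := Nat.cast_nonneg j
    have hd : 0 < (1 - lam*z)*(r + (j:ℝ)*z) := by positivity
    apply div_nonneg _ hd.le
    nlinarith [mul_nonneg hl0.le hr.le]
  have hS_le : ∀ i, S i ≤ (i:ℝ) * (((i:ℝ) + r)/((1 - lam*z)*r)) := by
    intro i
    have key : ∀ j ∈ Finset.Icc 1 i,
        (((j:ℝ) + lam*r)/((1 - lam*z)*(r + (j:ℝ)*z))) ≤ ((i:ℝ) + r)/((1 - lam*z)*r) := by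
      intro j hj
      simp only [Finset.mem_Icc] at hj
      have hji : (j:ℝ) ≤ (i:ℝ) := Nat.cast_le.2 hj.2
      have hj0 : (0:ℝ) ≤ (j:ℝ) := Nat.cast_nonneg j
      apply div_le_div₀ (by positivity) (by nlinarith) (by positivity)
      nlinarith [mul_nonneg hj0 hz0.le]
    calc S i ≤ (Finset.Icc 1 i).card • (((i:ℝ) + r)/((1 - lam*z)*r)) :=
          Finset.sum_le_card_nsmul _ _ _ key
      _ = (i:ℝ) * (((i:ℝ) + r)/((1 - lam*z)*r)) := by
          rw [Nat.card_Icc]; simp [nsmul_eq_mul]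
  have hw_nonneg : ∀ i, 0 ≤ w i := fun i => mul_nonneg (hgpos i).le (hS_nonneg i)
  have hsum_w : Summable w := by
    apply Summable.of_nonneg_of_le hw_nonneg (fun i => ?_)
      (((Sgeo2.mul_left (z/((1-lam*z)*r))).add ((Sgeo1.mul_left (z/(1-lam*z))))))
    calc w i ≤ (z * q ^ i) * ((i:ℝ) * (((i:ℝ) + r)/((1 - lam*z)*r))) := by
          apply mul_le_mul (hgle i) (hS_le i) (hS_nonneg i) (by positivity)
      _ = z/((1-lam*z)*r) * ((i:ℝ)^2 * q^i) + z/(1-lam*z) * ((i:ℝ) * q^i) := by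
          field_simp
  -- termwise key inequality
  have key : ∀ k : ℕ, w (k+1) ≤ (r/(z*(r+z))) * (((k:ℝ)+1) * (g r lam k z - g r lam (k+1) z)) := by
    intro k
    have hQ : 0 < r + ((k:ℝ)+1) * z := by positivity
    set ψ : ℝ := (((k:ℝ)+1) + lam*r)/((1 - lam*z)*(r + ((k:ℝ)+1)*z)) with hψdef
    have hψ_nonneg : 0 ≤ ψ := by positivity
    have hSψ : S (k+1) ≤ ((k:ℝ)+1) * ψ := by
      have key2 : ∀ j ∈ Finset.Icc 1 (k+1),
          (((j:ℝ) + lam*r)/((1 - lam*z)*(r + (j:ℝ)*z))) ≤ ψ := by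
        intro j hj
        simp only [Finset.mem_Icc] at hj
        have hji : (j:ℝ) ≤ (k:ℝ)+1 := by exact_mod_cast hj.2
        have hj0 : (0:ℝ) ≤ (j:ℝ) := Nat.cast_nonneg j
        rw [hψdef, div_le_div_iff₀ (by positivity) (by positivity)]
        nlinarith [mul_nonneg (mul_nonneg hr.le (sub_nonneg.2 hji)) hc.le,
          mul_pos hr hz0, mul_nonneg hj0 hz0.le]
      calc S (k+1) ≤ (Finset.Icc 1 (k+1)).card • ψ := Finset.sum_le_card_nsmul _ _ _ key2
        _ = ((k:ℝ)+1) * ψ := by rw [Nat.card_Icc]; push_cast; simp [nsmul_eq_mul]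
    have hgs : g r lam (k+1) z = g r lam k z * (r*(1-lam*z)/(r+((k:ℝ)+1)*z)) := g_succ r lam k z
    have single : g r lam (k+1) z * ψ ≤ (r/(z*(r+z))) * (g r lam k z - g r lam (k+1) z) := by
      have e1 : g r lam (k+1) z * ψ
          = g r lam k z * r * (((k:ℝ)+1) + lam*r) / ((r+((k:ℝ)+1)*z)*(r+((k:ℝ)+1)*z)) := by
        rw [hgs, hψdef]; field_simp
      have e2 : (r/(z*(r+z))) * (g r lam k z - g r lam (k+1) z)
          = g r lam k z * r * (((k:ℝ)+1) + lam*r) / ((r+z)*(r+((k:ℝ)+1)*z)) := by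
        rw [hgs]; field_simp; ring
      rw [e1, e2]
      have hA : 0 ≤ g r lam k z * r * (((k:ℝ)+1) + lam*r) := by
        have := (hgpos k).le; positivity
      apply div_le_div_of_nonneg_left hA (by positivity)
      have h1 : r + z ≤ r + ((k:ℝ)+1)*z := by nlinarith [mul_nonneg (Nat.cast_nonneg k) hz0.le]
      nlinarith [mul_le_mul_of_nonneg_right h1 hQ.le]
    calc w (k+1) = g r lam (k+1) z * S (k+1) := rfl
      _ ≤ g r lam (k+1) z * (((k:ℝ)+1) * ψ) :=
          mul_le_mul_of_nonneg_left hSψ (hgpos (k+1)).le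
      _ = ((k:ℝ)+1) * (g r lam (k+1) z * ψ) := by ring
      _ ≤ ((k:ℝ)+1) * ((r/(z*(r+z))) * (g r lam k z - g r lam (k+1) z)) :=
          mul_le_mul_of_nonneg_left single (by positivity)
      _ = (r/(z*(r+z))) * (((k:ℝ)+1) * (g r lam k z - g r lam (k+1) z)) := by ring
  -- telescoping
  set b : ℕ → ℝ := fun k => ((k:ℝ)+1) * g r lam k z with hbdef
  have hb2 : Summable b := hb
  have hb' : Summable (fun k => b (k+1)) := (summable_nat_add_iff 1).2 hb2
  have hg' : Summable (fun k => g r lam (k+1) z) := (summable_nat_add_iff 1).2 hsum_g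
  have hfun : ∀ k : ℕ, ((k:ℝ)+1) * (g r lam k z - g r lam (k+1) z)
      = (b k - b (k+1)) + g r lam (k+1) z := by
    intro k
    simp only [hbdef]
    push_cast
    ring
  have hTel : Summable (fun k => (b k - b (k+1)) + g r lam (k+1) z) := (hb2.sub hb').add hg'
  have hT : ∑' k : ℕ, ((k:ℝ)+1) * (g r lam k z - g r lam (k+1) z) = ∑' i, g r lam i z := by
    have e0 : ∑' k : ℕ, ((k:ℝ)+1) * (g r lam k z - g r lam (k+1) z)
        = ∑' k : ℕ, ((b k - b (k+1)) + g r lam (k+1) z) := tsum_congr hfun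
    rw [e0, Summable.tsum_add (hb2.sub hb') hg', Summable.tsum_sub hb2 hb']
    have e1 := Summable.tsum_eq_zero_add hb2
    have e2 := Summable.tsum_eq_zero_add hsum_g
    have hb0 : b 0 = g r lam 0 z := by simp [hbdef]
    linarith [e1, e2]
  have hsum_w' : Summable (fun k => w (k+1)) := (summable_nat_add_iff 1).2 hsum_w
  have hsRHS : Summable (fun k : ℕ =>
      (r/(z*(r+z))) * (((k:ℝ)+1) * (g r lam k z - g r lam (k+1) z))) := by
    have := hTel.mul_left (r/(z*(r+z)))
    apply this.congr
    intro k
    rw [hfun k]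
  have hW : ∑' k : ℕ, w (k+1) ≤ (r/(z*(r+z))) * ∑' i, g r lam i z := by
    calc ∑' k : ℕ, w (k+1)
        ≤ ∑' k : ℕ, (r/(z*(r+z))) * (((k:ℝ)+1) * (g r lam k z - g r lam (k+1) z)) :=
          Summable.tsum_le_tsum key hsum_w' hsRHS
      _ = (r/(z*(r+z))) * ∑' k : ℕ, (((k:ℝ)+1) * (g r lam k z - g r lam (k+1) z)) :=
          tsum_mul_left
      _ = (r/(z*(r+z))) * ∑' i, g r lam i z := by rw [hT]
  have hw0 : w 0 = 0 := by simp [hwdef, hSdef]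
  have hw_sum_eq : ∑' i, w i = w 0 + ∑' k : ℕ, w (k+1) := Summable.tsum_eq_zero_add hsum_w
  have hfpos : 0 < ∑' i, g r lam i z := by
    have h := Summable.le_tsum hsum_g 0 (fun j _ => (hgpos j).le)
    rw [g_zero] at h
    linarith
  have hσ : r/(z*(r+z)) < 1/z := by
    rw [div_lt_div_iff₀ (by positivity) hz0]
    nlinarith
  have hdecomp : ∀ i, gD r lam i z = g r lam i z * (1/z) - w i := by
    intro i
    simp only [gD, hwdef, hSdef]
    ring
  have hfinal : ∑' i, gD r lam i z = (∑' i, g r lam i z) * (1/z) - ∑' i, w i := by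
    rw [tsum_congr hdecomp, Summable.tsum_sub (hsum_g.mul_right _) hsum_w, tsum_mul_right]
  rw [hfinal]
  have h1 : ∑' i, w i ≤ (r/(z*(r+z))) * ∑' i, g r lam i z := by
    rw [hw_sum_eq, hw0, zero_add]; exact hW
  have h2 : (r/(z*(r+z))) * (∑' i, g r lam i z) < (1/z) * (∑' i, g r lam i z) :=
    mul_lt_mul_of_pos_right hσ hfpos
  have h3 : (∑' i, g r lam i z) * (1/z) = (1/z) * (∑' i, g r lam i z) := mul_comm _ _
  linarith

lemma gD_bound {r lam a b z : ℝ} (hr : 0 < r) (hl0 : 0 < lam) (hl1 : lam < 1)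
    (ha : 0 < a) (haz : a ≤ z) (hzb : z ≤ b) (hb1 : b < 1) (i : ℕ) :
    ‖gD r lam i z‖ ≤ (1/a + (i:ℝ) * (((i:ℝ)+r)/((1-lam*b)*r))) * (b * (r/(r+a))^i) := by
  have hz : 0 < z := lt_of_lt_of_le ha haz
  have hcb : 0 < 1 - lam*b := by nlinarith
  have hc : 0 < 1 - lam*z := by nlinarith
  have hSn := S_nonneg hr hz hl0.le hc i
  have hSl := S_le hr hz hl1.le hcb (by nlinarith) i
  have hgp := g_pos hr hz hc i
  have hgb := g_bound hr ha haz hzb hl0.le hc i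
  rw [gD, Real.norm_eq_abs, abs_mul, abs_of_pos hgp]
  have habs : |1/z - ∑ j ∈ Finset.Icc 1 i, (((j:ℝ) + lam*r)/((1 - lam*z)*(r + (j:ℝ)*z)))|
      ≤ 1/a + (i:ℝ) * (((i:ℝ)+r)/((1-lam*b)*r)) := by
    rw [abs_le]
    have h1 : 0 < 1/z := by positivity
    have h0a : 0 < 1/a := by positivity
    constructor
    · linarith
    · have h3 : 1/z ≤ 1/a := one_div_le_one_div_of_le ha haz
      linarith
  have hb0 : 0 < b := lt_of_lt_of_le hz hzb
  calc g r lam i z * |1/z - ∑ j ∈ Finset.Icc 1 i, (((j:ℝ) + lam*r)/((1 - lam*z)*(r + (j:ℝ)*z)))|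
      ≤ (b * (r/(r+a))^i) * (1/a + (i:ℝ) * (((i:ℝ)+r)/((1-lam*b)*r))) := by
        apply mul_le_mul hgb habs (abs_nonneg _) (by positivity)
    _ = (1/a + (i:ℝ) * (((i:ℝ)+r)/((1-lam*b)*r))) * (b * (r/(r+a))^i) := by ring

theorem stmt2 (r lam : ℝ) (hr : 0 < r) (hlam : lam ∈ Set.Ioo (0:ℝ) 1) :
    ∀ x y : ℝ, 0 < x → x < y → y < 1 → f r lam x < f r lam y := by
  obtain ⟨hl0, hl1⟩ := hlam
  intro x y hx hxy hy1
  set a : ℝ := x/2 with hadef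
  set b : ℝ := (1+y)/2 with hbdef
  have ha : 0 < a := by positivity
  have hax : a < x := by rw [hadef]; linarith
  have hyb : y < b := by rw [hbdef]; linarith
  have hb1 : b < 1 := by rw [hbdef]; linarith
  have hxy1 : x < 1 := lt_trans hxy hy1
  have hcb : 0 < 1 - lam*b := by nlinarith
  set q : ℝ := r/(r+a) with hqdef
  have hq0 : 0 < q := by positivity
  have hq1 : q < 1 := by rw [hqdef, div_lt_one (by positivity)]; linarith
  have hqn : ‖q‖ < 1 := by rw [Real.norm_eq_abs, abs_of_pos hq0]; exact hq1
  set u : ℕ → ℝ := fun i => (1/a + (i:ℝ) * (((i:ℝ)+r)/((1-lam*b)*r))) * (b * q^i) with hudef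
  have hu : Summable u := by
    have Sgeo0 : Summable (fun i : ℕ => q ^ i) := summable_geometric_of_lt_one hq0.le hq1
    have Sgeo1 : Summable (fun i : ℕ => (i:ℝ) * q ^ i) := by
      have := summable_pow_mul_geometric_of_norm_lt_one 1 hqn
      simpa using this
    have Sgeo2 : Summable (fun i : ℕ => (i:ℝ)^2 * q ^ i) :=
      summable_pow_mul_geometric_of_norm_lt_one 2 hqn
    have : Summable (fun i : ℕ =>
        (b/a)*q^i + (b/((1-lam*b)*r))*((i:ℝ)^2*q^i) + (b/(1-lam*b))*((i:ℝ)*q^i)) :=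
      ((Sgeo0.mul_left _).add (Sgeo2.mul_left _)).add (Sgeo1.mul_left _)
    apply this.congr
    intro i
    rw [hudef]
    field_simp
    ring
  have hmemc : ∀ z ∈ Set.Ioo a b, 0 < z ∧ 0 < 1 - lam * z := by
    intro z hz
    obtain ⟨hz1, hz2⟩ := hz
    exact ⟨lt_trans ha hz1, by nlinarith⟩
  have hder : ∀ (i : ℕ), ∀ z ∈ Set.Ioo a b, HasDerivAt (g r lam i) (gD r lam i z) z := by
    intro i z hz
    obtain ⟨h1, h2⟩ := hmemc z hz
    exact g_hasDeriv hr h1 h2 i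
  have hbound : ∀ (i : ℕ), ∀ z ∈ Set.Ioo a b, ‖gD r lam i z‖ ≤ u i := by
    intro i z hz
    exact gD_bound hr hl0 hl1 ha hz.1.le hz.2.le hb1 i
  have hxt : x ∈ Set.Ioo a b := ⟨hax, by rw [hbdef]; linarith⟩
  have hsum0 : Summable (fun i => g r lam i x) := by
    have hcx : 0 < 1 - lam*x := by nlinarith
    have hgb := g_bound hr hx le_rfl le_rfl hl0.le hcx
    have hqx1 : r/(r+x) < 1 := by rw [div_lt_one (by positivity)]; linarith
    apply Summable.of_nonneg_of_le (fun i => (g_pos hr hx hcx i).le) hgb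
      ((summable_geometric_of_lt_one (by positivity) hqx1).mul_left x)
  have hF : ∀ z ∈ Set.Ioo a b, HasDerivAt (f r lam) (∑' i, gD r lam i z) z := by
    intro z hz
    exact hasDerivAt_tsum_of_isPreconnected hu isOpen_Ioo isPreconnected_Ioo
      hder hbound hxt hsum0 hz
  have hsub : Set.Icc x y ⊆ Set.Ioo a b := by
    intro z hz
    exact ⟨lt_of_lt_of_le hax hz.1, lt_of_le_of_lt hz.2 hyb⟩
  have hmono : StrictMonoOn (f r lam) (Set.Icc x y) := by
    apply strictMonoOn_of_deriv_pos (convex_Icc x y)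
    · intro z hz
      exact (hF z (hsub hz)).continuousAt.continuousWithinAt
    · intro z hz
      rw [interior_Icc] at hz
      have hz' := hsub (Set.Ioo_subset_Icc_self hz)
      rw [(hF z hz').deriv]
      exact sum_gD_pos hr hl0 hl1 (lt_trans hx hz.1) (lt_trans hz.2 hy1)
  exact hmono ⟨le_refl x, hxy.le⟩ ⟨hxy.le, le_refl y⟩ hxy
end

section
/- For every r > 0 and λ ∈ (0,1), f(p₀) tends to 0 as p₀ tends to 0 from the right, i.e., the limit of f along the filter of points of (0,1) approaching 0 is 0. -/
open scoped BigOperators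

section aux
variable {r lam x : ℝ}

lemma prod_pos' (hr : 0 < r) (hx : 0 < x) (i : ℕ) : 0 < ∏ j ∈ Finset.Icc 1 i, (r + (j : ℝ) * x) := by
  apply Finset.prod_pos
  intro j hj
  have : (0:ℝ) ≤ (j:ℝ) * x := by positivity
  linarith

lemma prod_ge_pow (hr : 0 < r) (hx : 0 < x) (i : ℕ) : r ^ i ≤ ∏ j ∈ Finset.Icc 1 i, (r + (j : ℝ) * x) := by
  calc r ^ i = ∏ j ∈ Finset.Icc 1 i, r := by
        rw [Finset.prod_const, Nat.card_Icc]; norm_num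
    _ ≤ _ := by
        apply Finset.prod_le_prod (fun j _ => le_of_lt hr)
        intro j hj
        have : (0:ℝ) ≤ (j:ℝ) * x := by positivity
        linarith

lemma g_nonneg (hr : 0 < r) (hx : 0 < x) (hlx : lam * x ≤ 1) (hx0 : 0 ≤ x) (i : ℕ) : 0 ≤ g r lam i x := by
  apply div_nonneg _ (le_of_lt (prod_pos' hr hx i))
  have h1 : (0:ℝ) ≤ 1 - lam * x := by linarith
  positivity

lemma g_le_x (hr : 0 < r) (hx : 0 < x) (hlx : lam * x ≤ 1) (hlx0 : 0 ≤ lam * x) (i : ℕ) : g r lam i x ≤ x := by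
  rw [g, div_le_iff₀ (prod_pos' hr hx i)]
  have h1 : (1 - lam * x) ^ i ≤ 1 :=
    pow_le_one₀ (by linarith) (by linarith)
  calc x * r ^ i * (1 - lam * x) ^ i ≤ x * r ^ i * 1 := by
        apply mul_le_mul_of_nonneg_left h1; positivity
    _ = x * r ^ i := by ring
    _ ≤ x * ∏ j ∈ Finset.Icc 1 i, (r + (j : ℝ) * x) :=
        mul_le_mul_of_nonneg_left (prod_ge_pow hr hx i) (le_of_lt hx)

lemma prod_ge_shift (hr : 0 < r) (hx : 0 < x) (N i : ℕ) :
    r ^ N * (r + (N:ℝ) * x) ^ i ≤ ∏ j ∈ Finset.Icc 1 (N + i), (r + (j : ℝ) * x) := by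
  induction i with
  | zero => simpa using prod_ge_pow hr hx N
  | succ i ih =>
    rw [show N + (i+1) = (N+i)+1 from rfl, Finset.prod_Icc_succ_top (by omega : 1 ≤ N+i+1)]
    have hfac : (r + (N:ℝ)*x) ≤ r + ((N+i+1 : ℕ):ℝ) * x := by
      push_cast
      nlinarith [hx.le]
    have h1 : (0:ℝ) ≤ r + (N:ℝ)*x := by positivity
    calc r ^ N * (r + (N:ℝ) * x) ^ (i+1)
        = (r ^ N * (r + (N:ℝ) * x) ^ i) * (r + (N:ℝ)*x) := by ring
      _ ≤ (∏ j ∈ Finset.Icc 1 (N + i), (r + (j : ℝ) * x)) * (r + ((N+i+1 : ℕ):ℝ) * x) := by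
          apply mul_le_mul ih hfac h1 (le_of_lt (prod_pos' hr hx (N+i)))

lemma g_shift_le (hr : 0 < r) (hx : 0 < x) (hlx : lam * x ≤ 1) (hlx0 : 0 ≤ lam * x) (N i : ℕ) :
    g r lam (N + i) x ≤ x * (r / (r + (N:ℝ) * x)) ^ i := by
  have hd : (0:ℝ) < r + (N:ℝ) * x := by positivity
  rw [g, div_le_iff₀ (prod_pos' hr hx (N+i))]
  have h1 : (1 - lam * x) ^ (N+i) ≤ 1 :=
    pow_le_one₀ (by linarith) (by linarith)
  have key : x * (r / (r + (N:ℝ) * x)) ^ i * (r ^ N * (r + (N:ℝ) * x) ^ i) = x * r ^ (N+i) := by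
    field_simp
    rw [div_pow, div_mul_eq_mul_div, div_mul_eq_mul_div, div_eq_iff (by positivity)]
    ring
  calc x * r ^ (N+i) * (1 - lam * x) ^ (N+i) ≤ x * r ^ (N+i) * 1 := by
        apply mul_le_mul_of_nonneg_left h1; positivity
    _ = x * (r / (r + (N:ℝ) * x)) ^ i * (r ^ N * (r + (N:ℝ) * x) ^ i) := by rw [key]; ring
    _ ≤ x * (r / (r + (N:ℝ) * x)) ^ i * ∏ j ∈ Finset.Icc 1 (N + i), (r + (j : ℝ) * x) := by
        apply mul_le_mul_of_nonneg_left (prod_ge_shift hr hx N i)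
        positivity

end aux

lemma summable_aux (hr : 0 < r) (hx : 0 < x) (hlx : lam * x ≤ 1) (hlx0 : 0 ≤ lam * x)
    (N : ℕ) (hN : 0 < N) : Summable (fun i => g r lam i x) := by
  rw [← summable_nat_add_iff N]
  have hd : (0:ℝ) < r + (N:ℝ) * x := by positivity
  have hN1 : (1:ℝ) ≤ (N:ℝ) := by exact_mod_cast hN
  have hq0 : 0 ≤ r / (r + (N:ℝ) * x) := by positivity
  have hq1 : r / (r + (N:ℝ) * x) < 1 := by
    rw [div_lt_one hd]; nlinarith
  apply Summable.of_nonneg_of_le (fun i => g_nonneg hr hx hlx hx.le _) (fun i => ?_)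
    ((summable_geometric_of_lt_one hq0 hq1).mul_left x)
  rw [add_comm]
  exact g_shift_le hr hx hlx hlx0 N i

lemma f_le (hr : 0 < r) (hx : 0 < x) (hlx : lam * x ≤ 1) (hlx0 : 0 ≤ lam * x)
    (N : ℕ) (hN : 0 < N) : f r lam x ≤ (N:ℝ) * x + (r / (N:ℝ) + x) := by
  have hsum := summable_aux hr hx hlx hlx0 N hN
  have hd : (0:ℝ) < r + (N:ℝ) * x := by positivity
  have hN1 : (1:ℝ) ≤ (N:ℝ) := by exact_mod_cast hN
  have hq0 : 0 ≤ r / (r + (N:ℝ) * x) := by positivity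
  have hq1 : r / (r + (N:ℝ) * x) < 1 := by
    rw [div_lt_one hd]; nlinarith
  rw [f, ← Summable.sum_add_tsum_nat_add N hsum]
  apply add_le_add
  · calc ∑ i ∈ Finset.range N, g r lam i x ≤ ∑ i ∈ Finset.range N, x :=
          Finset.sum_le_sum (fun i _ => g_le_x hr hx hlx hlx0 i)
      _ = (N:ℝ) * x := by simp [mul_comm]
  · have hs1 : Summable (fun i : ℕ => g r lam (i + N) x) :=
      (summable_nat_add_iff (f := fun n => g r lam n x) N).mpr hsum
    have hs2 : Summable (fun i : ℕ => x * (r / (r + (N:ℝ) * x)) ^ i) :=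
      (summable_geometric_of_lt_one hq0 hq1).mul_left x
    have hle : ∑' i, g r lam (i + N) x ≤ ∑' i, x * (r / (r + (N:ℝ) * x)) ^ i := by
      refine Summable.tsum_le_tsum (fun i => ?_) hs1 hs2
      rw [add_comm]
      exact g_shift_le hr hx hlx hlx0 N i
    rw [tsum_mul_left, tsum_geometric_of_lt_one hq0 hq1] at hle
    refine hle.trans (le_of_eq ?_)
    have h1 : 1 - r / (r + (N:ℝ) * x) = ((N:ℝ) * x) / (r + (N:ℝ) * x) := by
      field_simp
      ring
    rw [h1, inv_div]
    field_simp

theorem stmt3 (r lam : ℝ) (hr : 0 < r) (hlam : lam ∈ Set.Ioo (0:ℝ) 1) :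
    Filter.Tendsto (f r lam) (nhdsWithin 0 (Set.Ioo (0:ℝ) 1)) (nhds 0) := by
  obtain ⟨hlam0, hlam1⟩ := hlam
  rw [Metric.tendsto_nhdsWithin_nhds]
  intro ε hε
  obtain ⟨N, hN⟩ := exists_nat_gt (2 * r / ε)
  have hN0 : 0 < N := by
    have h : (0:ℝ) < (N:ℝ) := lt_trans (by positivity) hN
    exact_mod_cast h
  have hNR : (0:ℝ) < (N:ℝ) := by exact_mod_cast hN0
  have hrN : r / (N:ℝ) < ε / 2 := by
    rw [div_lt_iff₀ hNR]
    rw [div_lt_iff₀ hε] at hN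
    nlinarith
  refine ⟨ε / (2 * ((N:ℝ) + 1)), by positivity, ?_⟩
  intro x hx hdx
  obtain ⟨hx0, hx1⟩ := hx
  rw [Real.dist_eq, sub_zero] at hdx ⊢
  have hxd : x < ε / (2 * ((N:ℝ) + 1)) := lt_of_abs_lt hdx
  have hlx : lam * x ≤ 1 := by nlinarith
  have hlx0 : 0 ≤ lam * x := by positivity
  have hf0 : 0 ≤ f r lam x :=
    tsum_nonneg (fun i => g_nonneg hr hx0 hlx hx0.le i)
  rw [abs_of_nonneg hf0]
  have hb := f_le hr hx0 hlx hlx0 N hN0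
  have hkey : ((N:ℝ) + 1) * x < ε / 2 := by
    have h2 : ((N:ℝ)+1) * (ε / (2*((N:ℝ)+1))) = ε/2 := by
      field_simp
    calc ((N:ℝ)+1)*x < ((N:ℝ)+1)*(ε/(2*((N:ℝ)+1))) :=
          mul_lt_mul_of_pos_left hxd (by positivity)
      _ = ε/2 := h2
  calc f r lam x ≤ (N:ℝ) * x + (r / (N:ℝ) + x) := hb
    _ = ((N:ℝ) + 1) * x + r / (N:ℝ) := by ring
    _ < ε / 2 + ε / 2 := by exact add_lt_add hkey hrN
    _ = ε := by ring
end

section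
/- For every real x > 0 and every real a ≥ 0, the lower incomplete Gamma function satisfies ∫_0^a t^{x−1} e^{−t} dt = a^x · e^{−a} · Σ_{k=0}^∞ a^k / (x(x+1)···(x+k)), where the denominator of the k-th term is ∏_{j=0}^{k} (x+j). -/
open scoped BigOperators

open MeasureTheory Filter

private lemma integ_aux {c : ℝ} (hc : -1 < c) (a : ℝ) :
    IntegrableOn (fun t : ℝ => t ^ c * Real.exp (-t)) (Set.Ioo 0 a) := by
  have h := Real.GammaIntegral_convergent (s := c + 1) (by linarith)
  have h2 : IntegrableOn (fun t : ℝ => Real.exp (-t) * t ^ (c + 1 - 1)) (Set.Ioo 0 a) :=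
    h.mono_set Set.Ioo_subset_Ioi_self
  simpa [add_sub_cancel_right, mul_comm] using h2

private lemma recur {x a : ℝ} (hx : 0 < x) (ha : 0 ≤ a) {p : ℝ} (hp : x ≤ p) :
    ∫ t in Set.Ioo (0:ℝ) a, t ^ p * Real.exp (-t) =
      p * (∫ t in Set.Ioo (0:ℝ) a, t ^ (p - 1) * Real.exp (-t)) - a ^ p * Real.exp (-a) := by
  have hp0 : 0 < p := lt_of_lt_of_le hx hp
  set F : ℝ → ℝ := fun t => t ^ p * Real.exp (-t) with hF
  have hderiv : ∀ t ∈ Set.Ioo (0:ℝ) a,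
      HasDerivWithinAt F (p * t ^ (p - 1) * Real.exp (-t) - t ^ p * Real.exp (-t))
        (Set.Ioi t) t := by
    intro t ht
    have h1 : HasDerivAt (fun t : ℝ => t ^ p) (p * t ^ (p - 1)) t :=
      Real.hasDerivAt_rpow_const (Or.inl ht.1.ne')
    have h2 : HasDerivAt (fun t : ℝ => Real.exp (-t)) (-Real.exp (-t)) t := by
      simpa using (hasDerivAt_neg t).exp
    have := h1.mul h2
    refine (HasDerivAt.hasDerivWithinAt ?_)
    refine this.congr_deriv ?_
    ring
  have hcont : ContinuousOn F (Set.Icc 0 a) := by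
    apply ContinuousOn.mul
    · intro t _
      exact (Real.continuousAt_rpow_const t p (Or.inr hp0.le)).continuousWithinAt
    · exact (Real.continuous_exp.comp continuous_neg).continuousOn
  have hint : IntervalIntegrable
      (fun t => p * t ^ (p - 1) * Real.exp (-t) - t ^ p * Real.exp (-t)) volume 0 a := by
    rw [intervalIntegrable_iff_integrableOn_Ioo_of_le ha]
    apply Integrable.sub
    · have := (integ_aux (c := p - 1) (by linarith) a).const_mul p
      simpa [mul_assoc] using this
    · exact integ_aux (by linarith) a
  have key := intervalIntegral.integral_eq_sub_of_hasDeriv_right_of_le ha hcont hderiv hint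
  rw [intervalIntegral.integral_of_le ha, MeasureTheory.integral_Ioc_eq_integral_Ioo] at key
  have hF0 : F 0 = 0 := by simp [hF, Real.zero_rpow hp0.ne']
  have hsplit : ∫ t in Set.Ioo (0:ℝ) a,
      (p * t ^ (p - 1) * Real.exp (-t) - t ^ p * Real.exp (-t)) =
      p * (∫ t in Set.Ioo (0:ℝ) a, t ^ (p - 1) * Real.exp (-t)) -
        ∫ t in Set.Ioo (0:ℝ) a, t ^ p * Real.exp (-t) := by
    rw [MeasureTheory.integral_sub]
    · congr 1
      rw [← MeasureTheory.integral_const_mul]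
      congr 1; ext t; ring
    · have := (integ_aux (c := p - 1) (by linarith) a).const_mul p
      simpa [mul_assoc] using this
    · exact integ_aux (by linarith) a
  rw [hsplit, hF0, sub_zero, hF] at key
  simp only at key
  rw [hF]
  linarith [key]

theorem stmt5 (x a : ℝ) (hx : 0 < x) (ha : 0 ≤ a) :
    ∫ t in Set.Ioo (0:ℝ) a, t ^ (x - 1) * Real.exp (-t) =
      a ^ x * Real.exp (-a) *
        ∑' k : ℕ, a ^ k / ∏ j ∈ Finset.range (k + 1), (x + (j : ℝ)) := by
  rcases eq_or_lt_of_le ha with rfl | ha'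
  · simp [Real.zero_rpow hx.ne']
  set q : ℕ → ℝ := fun n => ∏ j ∈ Finset.range n, (x + (j : ℝ)) with hq
  have hqpos : ∀ n, 0 < q n := fun n => Finset.prod_pos (fun j _ => by positivity)
  set I : ℕ → ℝ := fun n => ∫ t in Set.Ioo (0:ℝ) a, t ^ (x + (n : ℝ) - 1) * Real.exp (-t)
    with hI
  -- recurrence
  have key : ∀ n : ℕ, I (n + 1) = (x + n) * I n - a ^ (x + (n : ℝ)) * Real.exp (-a) := by
    intro n
    have h := recur hx ha (p := x + (n : ℝ)) (le_add_of_nonneg_right n.cast_nonneg)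
    have e1 : x + ((n + 1 : ℕ) : ℝ) - 1 = x + (n : ℝ) := by push_cast; ring
    rw [hI]; simp only [e1]
    exact h
  have hrec : ∀ n : ℕ, I n / q n - I (n + 1) / q (n + 1)
      = a ^ x * a ^ n * Real.exp (-a) / q (n + 1) := by
    intro n
    have hq1 : q (n + 1) = q n * (x + (n : ℝ)) := Finset.prod_range_succ _ n
    have hax : a ^ (x + (n : ℝ)) = a ^ x * a ^ n := by
      rw [Real.rpow_add ha', Real.rpow_natCast]
    have hk := key n
    rw [hax] at hk
    have h1 := hqpos n
    have h2 : (0:ℝ) < x + n := by positivity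
    rw [hq1, hk]
    field_simp
    ring
  -- partial sums telescope
  have hpartial : ∀ n : ℕ,
      ∑ k ∈ Finset.range n, a ^ x * Real.exp (-a) * (a ^ k / q (k + 1))
        = I 0 - I n / q n := by
    intro n
    induction n with
    | zero => simp [hq]
    | succ m ih =>
      rw [Finset.sum_range_succ, ih]
      have := hrec m
      have : a ^ x * Real.exp (-a) * (a ^ m / q (m + 1))
          = I m / q m - I (m + 1) / q (m + 1) := by
        rw [hrec m]; ring
      rw [this]; ring
  -- bound on tail
  have hfact : ∀ n : ℕ, x * (n.factorial : ℝ) ≤ q (n + 1) := by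
    intro n
    induction n with
    | zero => simp [hq]
    | succ m ih =>
      have hq1 : q (m + 2) = q (m + 1) * (x + (m + 1 : ℕ)) := Finset.prod_range_succ _ (m + 1)
      rw [hq1, Nat.factorial_succ]
      push_cast
      have h1 : (0:ℝ) ≤ (m.factorial : ℝ) := by positivity
      have h2 : ((m:ℝ) + 1) ≤ x + ((m:ℝ) + 1) := by linarith
      calc x * (((m:ℝ) + 1) * m.factorial) = (x * m.factorial) * ((m:ℝ) + 1) := by ring
        _ ≤ q (m + 1) * ((m:ℝ) + 1) := by
            apply mul_le_mul_of_nonneg_right ih; positivity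
        _ ≤ q (m + 1) * (x + ((m:ℝ) + 1)) := by
            apply mul_le_mul_of_nonneg_left _ (hqpos (m+1)).le; linarith
  have hIbound : ∀ n : ℕ, ‖I (n + 1)‖ ≤ a ^ (x + (n : ℝ)) * a := by
    intro n
    have hvol : volume (Set.Ioo (0:ℝ) a) < ⊤ := by
      rw [Real.volume_Ioo]; exact ENNReal.ofReal_lt_top
    have e1 : x + ((n + 1 : ℕ) : ℝ) - 1 = x + (n : ℝ) := by push_cast; ring
    have hb : ∀ t ∈ Set.Ioo (0:ℝ) a,
        ‖t ^ (x + ((n + 1 : ℕ) : ℝ) - 1) * Real.exp (-t)‖ ≤ a ^ (x + (n : ℝ)) := by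
      intro t ht
      rw [e1, Real.norm_eq_abs, abs_mul, abs_of_nonneg (Real.rpow_nonneg ht.1.le _),
        abs_of_nonneg (Real.exp_pos _).le]
      have h1 : t ^ (x + (n : ℝ)) ≤ a ^ (x + (n : ℝ)) :=
        Real.rpow_le_rpow ht.1.le ht.2.le (by positivity)
      have h2 : Real.exp (-t) ≤ 1 := by
        rw [← Real.exp_zero]
        exact Real.exp_le_exp.mpr (by linarith [ht.1])
      calc t ^ (x + (n : ℝ)) * Real.exp (-t) ≤ t ^ (x + (n : ℝ)) * 1 := by
            apply mul_le_mul_of_nonneg_left h2 (Real.rpow_nonneg ht.1.le _)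
        _ = t ^ (x + (n : ℝ)) := mul_one _
        _ ≤ a ^ (x + (n : ℝ)) := h1
    have hmeas : AEStronglyMeasurable
        (fun t : ℝ => t ^ (x + ((n + 1 : ℕ) : ℝ) - 1) * Real.exp (-t))
        (volume.restrict (Set.Ioo (0:ℝ) a)) := by
      apply (integ_aux (c := x + ((n + 1 : ℕ) : ℝ) - 1) ?_ a).aestronglyMeasurable
      push_cast
      linarith [n.cast_nonneg (α := ℝ)]
    have := MeasureTheory.norm_setIntegral_le_of_norm_le_const hvol hb
    calc ‖I (n + 1)‖ ≤ a ^ (x + (n : ℝ)) * (volume (Set.Ioo (0:ℝ) a)).toReal := this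
      _ = a ^ (x + (n : ℝ)) * a := by simp [Real.volume_Ioo, ENNReal.toReal_ofReal ha]
  -- tail tends to zero
  have htail : Tendsto (fun n : ℕ => I n / q n) atTop (nhds 0) := by
    rw [← tendsto_add_atTop_iff_nat 1]
    apply squeeze_zero_norm (a := fun n : ℕ => (a ^ x * a / x) * (a ^ n / n.factorial))
    · intro n
      have hax : a ^ (x + (n : ℝ)) = a ^ x * a ^ n := by
        rw [Real.rpow_add ha', Real.rpow_natCast]
      rw [norm_div, Real.norm_eq_abs (q (n+1)), abs_of_pos (hqpos (n+1))]
      have h1 := hIbound n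
      have h2 := hfact n
      have hfp : (0:ℝ) < (n.factorial : ℝ) := by positivity
      have hqn := hqpos (n + 1)
      rw [div_le_iff₀ hqn]
      have hrhs : (a ^ x * a / x) * (a ^ n / n.factorial) * (x * n.factorial)
          ≤ (a ^ x * a / x) * (a ^ n / n.factorial) * q (n + 1) := by
        apply mul_le_mul_of_nonneg_left h2
        positivity
      have heq : (a ^ x * a / x) * (a ^ n / n.factorial) * (x * n.factorial)
          = a ^ x * a ^ n * a := by field_simp
      calc ‖I (n + 1)‖ ≤ a ^ (x + (n : ℝ)) * a := h1
        _ = a ^ x * a ^ n * a := by rw [hax]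
        _ = (a ^ x * a / x) * (a ^ n / n.factorial) * (x * n.factorial) := heq.symm
        _ ≤ _ := hrhs
    · simpa using (FloorSemiring.tendsto_pow_div_factorial_atTop a).const_mul (a ^ x * a / x)
  -- conclude HasSum
  have hsum : HasSum (fun k : ℕ => a ^ x * Real.exp (-a) * (a ^ k / q (k + 1))) (I 0) := by
    rw [hasSum_iff_tendsto_nat_of_nonneg]
    · have h1 : Tendsto (fun n : ℕ => I 0 - I n / q n) atTop (nhds (I 0 - 0)) :=
        tendsto_const_nhds.sub htail
      rw [sub_zero] at h1
      exact h1.congr (fun n => (hpartial n).symm)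
    · intro k
      have := (hqpos (k + 1)).le
      positivity
  have hc : (0:ℝ) < a ^ x * Real.exp (-a) := by positivity
  have hf : HasSum (fun k : ℕ => a ^ k / q (k + 1)) ((a ^ x * Real.exp (-a))⁻¹ * I 0) := by
    have := hsum.mul_left (a ^ x * Real.exp (-a))⁻¹
    have e : (fun k : ℕ => a ^ k / q (k + 1)) = fun k => (a ^ x * Real.exp (-a))⁻¹ * (a ^ x * Real.exp (-a) * (a ^ k / q (k + 1))) := by
      funext k
      rw [← mul_assoc, inv_mul_cancel₀ hc.ne', one_mul]
    rw [e]; exact this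
  have htsum : (∑' k : ℕ, a ^ k / q (k + 1)) = (a ^ x * Real.exp (-a))⁻¹ * I 0 :=
    hf.tsum_eq
  have hgoal : (∫ t in Set.Ioo (0:ℝ) a, t ^ (x - 1) * Real.exp (-t)) = I 0 := by
    rw [hI]
    norm_num
  rw [hgoal, htsum, ← mul_assoc, mul_inv_cancel₀ hc.ne', one_mul]
end

section
/- For every r > 0, λ ∈ (0,1) and p₀ ∈ (0,1), setting a = r(1/p₀ − λ) > 0, the function f admits the representation f(p₀) = p₀ + p₀ · e^{a} · a^{−r/p₀} · ∫_0^a t^{r/p₀} e^{−t} dt. -/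
open scoped BigOperators

open MeasureTheory

lemma prodpos (c : ℝ) (hc : 0 < c) (N : ℕ) : 0 < ∏ j ∈ Finset.Icc 1 N, (c + (j:ℝ)) :=
  Finset.prod_pos (fun j _ => by positivity)


-- integration by parts step
lemma ibp (d a : ℝ) (hd : 0 < d) (ha : 0 < a) :
    ∫ t in Set.Ioo (0:ℝ) a, t ^ d * Real.exp (-t) =
      a ^ (d+1) * Real.exp (-a) / (d+1) +
        (∫ t in Set.Ioo (0:ℝ) a, t ^ (d+1) * Real.exp (-t)) / (d+1) := by
  have hd1 : (0:ℝ) < d + 1 := by linarith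
  have hcont : ∀ e : ℝ, 0 ≤ e → ContinuousOn (fun t : ℝ => t ^ e * Real.exp (-t)) (Set.uIcc 0 a) := by
    intro e he
    exact (continuousOn_id.rpow_const (fun x _ => Or.inr he)).mul
      (Real.continuous_exp.comp continuous_neg).continuousOn
  have hderiv : ∀ t ∈ Set.uIcc (0:ℝ) a,
      HasDerivAt (fun t : ℝ => t ^ (d+1) * Real.exp (-t) / (d+1))
        (t ^ d * Real.exp (-t) - t ^ (d+1) * Real.exp (-t) / (d+1)) t := by
    intro t ht
    have h1 : HasDerivAt (fun t : ℝ => t ^ (d+1)) ((d+1) * t ^ d) t := by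
      have := Real.hasDerivAt_rpow_const (x := t) (p := d+1) (Or.inr (by linarith))
      simpa using this
    have h2 : HasDerivAt (fun t : ℝ => Real.exp (-t)) (-Real.exp (-t)) t := by
      simpa using (hasDerivAt_neg t).exp
    have h3 := (h1.mul h2).div_const (d+1)
    refine h3.congr_deriv ?_
    field_simp
    ring
  have hint : IntervalIntegrable
      (fun t : ℝ => t ^ d * Real.exp (-t) - t ^ (d+1) * Real.exp (-t) / (d+1)) volume 0 a :=
    (((hcont d hd.le).sub ((hcont (d+1) hd1.le).div_const _)).intervalIntegrable)
  have hftc := intervalIntegral.integral_eq_sub_of_hasDerivAt hderiv hint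
  have hInt1 : IntervalIntegrable (fun t : ℝ => t ^ d * Real.exp (-t)) volume 0 a :=
    (hcont d hd.le).intervalIntegrable
  have hInt2 : IntervalIntegrable (fun t : ℝ => t ^ (d+1) * Real.exp (-t)) volume 0 a :=
    (hcont (d+1) hd1.le).intervalIntegrable
  have hsub := intervalIntegral.integral_sub hInt1 (hInt2.div_const (d+1))
  rw [hsub] at hftc
  have e0 : (0:ℝ) ^ (d+1) = 0 := Real.zero_rpow (by linarith)
  have hioo : ∀ e : ℝ, (∫ t in (0:ℝ)..a, t ^ e * Real.exp (-t)) =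
      ∫ t in Set.Ioo (0:ℝ) a, t ^ e * Real.exp (-t) := by
    intro e
    rw [intervalIntegral.integral_of_le ha.le, integral_Ioc_eq_integral_Ioo]
  rw [intervalIntegral.integral_div] at hftc
  rw [hioo, hioo] at hftc
  simp only [e0] at hftc
  norm_num at hftc
  linarith [hftc]

lemma stepB (c a : ℝ) (hc : 0 < c) (ha : 0 < a) (N : ℕ) :
    ∫ t in Set.Ioo (0:ℝ) a, t ^ c * Real.exp (-t) =
      Real.exp (-a) * (∑ i ∈ Finset.Icc 1 N, a ^ (c + i) / ∏ j ∈ Finset.Icc 1 i, (c + (j:ℝ)))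
        + (∫ t in Set.Ioo (0:ℝ) a, t ^ (c + N) * Real.exp (-t)) /
            ∏ j ∈ Finset.Icc 1 N, (c + (j:ℝ)) := by
  induction N with
  | zero => simp
  | succ N ih =>
    have hibp := ibp (c + N) a (by positivity) ha
    have hps : (∏ j ∈ Finset.Icc 1 (N+1), (c + (j:ℝ)))
        = (∏ j ∈ Finset.Icc 1 N, (c + (j:ℝ))) * (c + (N+1:ℕ)) :=
      Finset.prod_Icc_succ_top (Nat.le_add_left 1 N) _
    have hss : (∑ i ∈ Finset.Icc 1 (N+1), a ^ (c + i) / ∏ j ∈ Finset.Icc 1 i, (c + (j:ℝ)))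
        = (∑ i ∈ Finset.Icc 1 N, a ^ (c + i) / ∏ j ∈ Finset.Icc 1 i, (c + (j:ℝ)))
          + a ^ (c + (N+1:ℕ)) / ∏ j ∈ Finset.Icc 1 (N+1), (c + (j:ℝ)) :=
      Finset.sum_Icc_succ_top (Nat.le_add_left 1 N) _
    rw [ih, hibp, hss, hps]
    have h1 : (0:ℝ) < ∏ j ∈ Finset.Icc 1 N, (c + (j:ℝ)) := prodpos c hc N
    have h2 : (0:ℝ) < c + (N+1:ℕ) := by positivity
    have hcast : ((N+1:ℕ):ℝ) = (N:ℝ) + 1 := by push_cast; ring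
    rw [hcast]
    have hrw : c + ((N:ℝ)+1) = (c + N) + 1 := by ring
    rw [hrw]
    field_simp
    ring

lemma remtendsto (c a : ℝ) (hc : 0 < c) (ha : 0 < a) :
    Filter.Tendsto (fun N : ℕ => (∫ t in Set.Ioo (0:ℝ) a, t ^ (c + N) * Real.exp (-t)) /
      ∏ j ∈ Finset.Icc 1 N, (c + (j:ℝ))) Filter.atTop (nhds 0) := by
  have hbound : ∀ N : ℕ, |(∫ t in Set.Ioo (0:ℝ) a, t ^ (c + N) * Real.exp (-t)) /
      ∏ j ∈ Finset.Icc 1 N, (c + (j:ℝ))| ≤ (a ^ c * a) * (a ^ N / N.factorial) := by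
    intro N
    have hp := prodpos c hc N
    have hfac : ((N.factorial : ℝ)) ≤ ∏ j ∈ Finset.Icc 1 N, (c + (j:ℝ)) := by
      have : ((N.factorial : ℝ)) = ∏ j ∈ Finset.Icc 1 N, (j:ℝ) := by
        rw [← Nat.cast_prod]
        congr 1
        rw [← Finset.prod_Ico_id_eq_factorial N]
        rfl
      rw [this]
      exact Finset.prod_le_prod (fun j _ => by positivity) (fun j hj => by linarith [hc])
    have hnorm : ‖∫ t in Set.Ioo (0:ℝ) a, t ^ (c + N) * Real.exp (-t)‖ ≤ a ^ (c + N) * a := by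
      have h1 : ∀ t ∈ Set.Ioo (0:ℝ) a, ‖t ^ (c + N) * Real.exp (-t)‖ ≤ a ^ (c + N) := by
        intro t ht
        have htpos : (0:ℝ) ≤ t := ht.1.le
        rw [Real.norm_eq_abs, abs_of_nonneg
          (mul_nonneg (Real.rpow_nonneg htpos _) (Real.exp_pos _).le)]
        calc t ^ (c + N) * Real.exp (-t) ≤ t ^ (c + N) * 1 := by
              apply mul_le_mul_of_nonneg_left _ (Real.rpow_nonneg htpos _)
              exact Real.exp_le_one_iff.2 (by linarith [ht.1])
          _ = t ^ (c + N) := mul_one _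
          _ ≤ a ^ (c + N) := Real.rpow_le_rpow ht.1.le ht.2.le (by positivity)
      have := norm_setIntegral_le_of_norm_le_const
        (μ := volume) (s := Set.Ioo (0:ℝ) a)
        (by rw [Real.volume_Ioo]; exact ENNReal.ofReal_lt_top) h1
      calc ‖∫ t in Set.Ioo (0:ℝ) a, t ^ (c + N) * Real.exp (-t)‖
            ≤ a ^ (c + N) * (volume (Set.Ioo (0:ℝ) a)).toReal := this
          _ = a ^ (c + N) * a := by
              rw [Real.volume_Ioo, ENNReal.toReal_ofReal (by linarith)]
              ring_nf
    rw [abs_div, abs_of_pos hp]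
    calc |∫ t in Set.Ioo (0:ℝ) a, t ^ (c + N) * Real.exp (-t)| / ∏ j ∈ Finset.Icc 1 N, (c + (j:ℝ))
        ≤ (a ^ (c + N) * a) / (N.factorial : ℝ) := by
          apply div_le_div₀ (by positivity) hnorm (by positivity) hfac
      _ = (a ^ c * a) * (a ^ N / N.factorial) := by
          rw [Real.rpow_add ha, Real.rpow_natCast]
          field_simp
  have hlim : Filter.Tendsto (fun N : ℕ => (a ^ c * a) * (a ^ N / N.factorial))
      Filter.atTop (nhds 0) := by
    have := (FloorSemiring.tendsto_pow_div_factorial_atTop a).const_mul (a ^ c * a)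
    simpa using this
  apply squeeze_zero_norm hbound hlim


theorem stmt6 (r lam p₀ : ℝ) (hr : 0 < r) (hlam : lam ∈ Set.Ioo (0:ℝ) 1)
    (hp : p₀ ∈ Set.Ioo (0:ℝ) 1) (a : ℝ) (ha : a = r * (1 / p₀ - lam)) :
    0 < a ∧
      f r lam p₀ =
        p₀ + p₀ * Real.exp a * a ^ (-(r / p₀)) *
          ∫ t in Set.Ioo (0:ℝ) a, t ^ (r / p₀) * Real.exp (-t) := by
  obtain ⟨hp0, hp1⟩ := hp
  obtain ⟨hl0, hl1⟩ := hlam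
  have hinv : 1 < 1 / p₀ := by rw [lt_div_iff₀ hp0]; linarith
  have haa : 0 < a := by rw [ha]; apply mul_pos hr; linarith
  set c := r / p₀ with hc_def
  have hc : 0 < c := div_pos hr hp0
  set I := ∫ t in Set.Ioo (0:ℝ) a, t ^ c * Real.exp (-t) with hI_def
  refine ⟨haa, ?_⟩
  -- partial sums tendsto
  have hap : a * p₀ = r * (1 - lam * p₀) := by
    have h2 : (1 / p₀ - lam) * p₀ = 1 - lam * p₀ := by field_simp
    rw [ha, mul_assoc, h2]
  have hSN : Filter.Tendsto
      (fun N : ℕ => ∑ i ∈ Finset.Icc 1 N, a ^ (c + i) / ∏ j ∈ Finset.Icc 1 i, (c + (j:ℝ)))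
      Filter.atTop (nhds (Real.exp a * I)) := by
    have h1 : Filter.Tendsto
        (fun N : ℕ => Real.exp a * (I - (∫ t in Set.Ioo (0:ℝ) a, t ^ (c + N) * Real.exp (-t)) /
          ∏ j ∈ Finset.Icc 1 N, (c + (j:ℝ)))) Filter.atTop (nhds (Real.exp a * (I - 0))) :=
      (Filter.Tendsto.const_sub _ (remtendsto c a hc haa)).const_mul _
    rw [sub_zero] at h1
    refine h1.congr fun N => ?_
    have := stepB c a hc haa N
    rw [← hI_def] at this
    have hexp : Real.exp a * Real.exp (-a) = 1 := by
      rw [← Real.exp_add]; simp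
    set S := ∑ i ∈ Finset.Icc 1 N, a ^ (c + (i:ℝ)) / ∏ j ∈ Finset.Icc 1 i, (c + (j:ℝ)) with hS
    set R := (∫ t in Set.Ioo (0:ℝ) a, t ^ (c + (N:ℝ)) * Real.exp (-t)) /
      ∏ j ∈ Finset.Icc 1 N, (c + (j:ℝ)) with hR
    calc Real.exp a * (I - R) = Real.exp a * (Real.exp (-a) * S) := by rw [this]; ring
      _ = (Real.exp a * Real.exp (-a)) * S := by ring
      _ = S := by rw [hexp, one_mul]
  -- translate to range sums
  have hrange : ∀ N : ℕ,
      (∑ i ∈ Finset.Icc 1 N, a ^ (c + i) / ∏ j ∈ Finset.Icc 1 i, (c + (j:ℝ)))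
        = ∑ i ∈ Finset.range N, a ^ (c + (i+1:ℕ)) / ∏ j ∈ Finset.Icc 1 (i+1), (c + (j:ℝ)) := by
    intro N
    rw [← Finset.Ico_add_one_right_eq_Icc, Finset.sum_Ico_eq_sum_range]
    simp [add_comm]
  have hhs : HasSum (fun i : ℕ => a ^ (c + (i+1:ℕ)) / ∏ j ∈ Finset.Icc 1 (i+1), (c + (j:ℝ)))
      (Real.exp a * I) := by
    rw [hasSum_iff_tendsto_nat_of_nonneg]
    · exact hSN.congr fun N => hrange N
    · intro i
      have := prodpos c hc (i+1)
      positivity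
  -- g identity
  have hgid : ∀ i : ℕ, g r lam i p₀ = p₀ * a ^ i / ∏ j ∈ Finset.Icc 1 i, (c + (j:ℝ)) := by
    intro i
    have hprodeq : (∏ j ∈ Finset.Icc 1 i, (r + (j:ℝ) * p₀))
        = p₀ ^ i * ∏ j ∈ Finset.Icc 1 i, (c + (j:ℝ)) := by
      have step1 : (∏ j ∈ Finset.Icc 1 i, (r + (j:ℝ) * p₀))
          = ∏ j ∈ Finset.Icc 1 i, (p₀ * (c + (j:ℝ))) := by
        apply Finset.prod_congr rfl
        intro j _
        rw [hc_def]
        field_simp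
      rw [step1, Finset.prod_mul_distrib, Finset.prod_const, Nat.card_Icc,
        Nat.add_sub_cancel]
    rw [g, hprodeq]
    have h1 : r ^ i * (1 - lam * p₀) ^ i = (a * p₀) ^ i := by
      rw [← mul_pow, ← hap]
    have hppos := prodpos c hc i
    rw [mul_assoc, h1]
    rw [mul_pow]
    field_simp
  -- shifted series of g
  have hhsg : HasSum (fun i : ℕ => g r lam (i+1) p₀)
      (p₀ * a ^ (-c) * (Real.exp a * I)) := by
    refine (hhs.mul_left (p₀ * a ^ (-c))).congr_fun fun i => ?_
    rw [hgid (i+1)]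
    have hP := prodpos c hc (i+1)
    have hsplit : a ^ (c + (i+1:ℕ)) = a ^ c * a ^ (i+1:ℕ) := by
      rw [Real.rpow_add haa, Real.rpow_natCast]
    rw [hsplit, Real.rpow_neg haa.le]
    have hac : (0:ℝ) < a ^ c := Real.rpow_pos_of_pos haa c
    field_simp
  have hsum : Summable (fun i : ℕ => g r lam i p₀) := by
    have := hhsg.summable
    exact (summable_nat_add_iff 1).mp this
  have hft : f r lam p₀ = g r lam 0 p₀ + ∑' i : ℕ, g r lam (i+1) p₀ := by
    rw [f, Summable.tsum_eq_zero_add hsum]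
  rw [hft, hhsg.tsum_eq]
  have hg0 : g r lam 0 p₀ = p₀ := by simp [g]
  rw [hg0]
  ring
end

section
/- For every r > 0, λ ∈ (0,1), p₀ ∈ (0,1) and every integer n ≥ 1, the truncation error of f satisfies 0 < f(p₀) − Σ_{i=0}^n g_i(p₀) < g_n(p₀) · r(1−λp₀) / ((n + rλ)·p₀). -/
open scoped BigOperators

set_option maxHeartbeats 1000000 in
theorem stmt7 (r lam p₀ : ℝ) (hr : 0 < r) (hlam : lam ∈ Set.Ioo (0:ℝ) 1)
    (hp : p₀ ∈ Set.Ioo (0:ℝ) 1) (n : ℕ) (hn : 1 ≤ n) :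
    0 < f r lam p₀ - ∑ i ∈ Finset.range (n + 1), g r lam i p₀ ∧
      f r lam p₀ - ∑ i ∈ Finset.range (n + 1), g r lam i p₀ <
        g r lam n p₀ * (r * (1 - lam * p₀) / (((n : ℝ) + r * lam) * p₀)) := by
  obtain ⟨hl0, hl1⟩ := hlam
  obtain ⟨hp0, hp1⟩ := hp
  have hlp : 0 < 1 - lam * p₀ := by nlinarith
  set a : ℝ := r * (1 - lam * p₀) with ha
  have ha0 : 0 < a := mul_pos hr hlp
  have har : a < r := by nlinarith [mul_pos hl0 hp0]
  have hprod : ∀ i : ℕ, 0 < ∏ j ∈ Finset.Icc 1 i, (r + (j : ℝ) * p₀) := by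
    intro i
    apply Finset.prod_pos
    intro j _
    have : (0:ℝ) ≤ (j:ℝ) * p₀ := by positivity
    linarith
  have hgpos : ∀ i, 0 < g r lam i p₀ := by
    intro i
    unfold g
    exact div_pos (by positivity) (hprod i)
  have hrec : ∀ i : ℕ, g r lam (i+1) p₀ = g r lam i p₀ * (a / (r + ((i:ℝ)+1) * p₀)) := by
    intro i
    unfold g
    rw [Finset.prod_Icc_succ_top (Nat.le_add_left 1 i)]
    have h1 := (hprod i).ne'
    have h2 : (r + ((i:ℝ)+1) * p₀) ≠ 0 := by positivity
    push_cast
    field_simp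
    ring
  -- summability
  have hsum : Summable (fun i => g r lam i p₀) := by
    apply summable_of_ratio_norm_eventually_le (r := a / (r + p₀))
    · rw [div_lt_one (by positivity)]
      linarith
    · filter_upwards [] with i
      rw [Real.norm_of_nonneg (hgpos (i+1)).le, Real.norm_of_nonneg (hgpos i).le, hrec i,
        mul_comm]
      apply mul_le_mul_of_nonneg_right _ (hgpos i).le
      apply div_le_div_of_nonneg_left ha0.le (by positivity)
      have : (0:ℝ) ≤ (i:ℝ) * p₀ := by positivity
      linarith
  set q : ℝ := a / (r + ((n:ℝ)+1) * p₀) with hq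
  have hden : (0:ℝ) < r + ((n:ℝ)+1) * p₀ := by positivity
  have hq0 : 0 ≤ q := le_of_lt (div_pos ha0 hden)
  have hq1 : q < 1 := by
    rw [hq, div_lt_one hden]
    have : (0:ℝ) ≤ (n:ℝ) * p₀ := by positivity
    nlinarith
  -- geometric bound on the tail terms
  have hgeo : ∀ k : ℕ, g r lam (k + (n+1)) p₀ ≤ g r lam n p₀ * q ^ (k+1) := by
    intro k
    induction k with
    | zero =>
      simp only [Nat.zero_add, pow_one]
      rw [hrec n]
    | succ k ih =>
      have heq : k + 1 + (n + 1) = (k + (n+1)) + 1 := by ring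
      rw [heq, hrec (k + (n+1))]
      have hstep : a / (r + (((k + (n+1) : ℕ):ℝ)+1) * p₀) ≤ q := by
        rw [hq]
        apply div_le_div_of_nonneg_left ha0.le hden
        push_cast
        have : (0:ℝ) ≤ (k:ℝ) * p₀ + p₀ := by positivity
        nlinarith
      calc g r lam (k + (n+1)) p₀ * (a / (r + (((k + (n+1) : ℕ):ℝ)+1) * p₀))
          ≤ (g r lam n p₀ * q ^ (k+1)) * q := by
            apply mul_le_mul ih hstep (div_nonneg ha0.le (by positivity)) (mul_nonneg (hgpos n).le (pow_nonneg hq0 _))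
        _ = g r lam n p₀ * q ^ (k+1+1) := by ring
  -- express the truncation error as the tail
  have hsum' : Summable (fun k => g r lam (k + (n+1)) p₀) :=
    (summable_nat_add_iff (f := fun i => g r lam i p₀) (n+1)).2 hsum
  have htail : f r lam p₀ - ∑ i ∈ Finset.range (n + 1), g r lam i p₀
      = ∑' k : ℕ, g r lam (k + (n+1)) p₀ := by
    have := Summable.sum_add_tsum_nat_add (f := fun i => g r lam i p₀) (n+1) hsum
    unfold f
    linarith [this]
  constructor
  · rw [htail]
    exact Summable.tsum_pos hsum' (fun k => (hgpos _).le) 0 (hgpos (0 + (n+1)))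
  · rw [htail]
    have hgsum : Summable (fun k : ℕ => g r lam n p₀ * q ^ (k+1)) := by
      refine ((summable_geometric_of_lt_one hq0 hq1).mul_left
        (g r lam n p₀ * q)).congr fun k => ?_
      ring
    have hle : (∑' k : ℕ, g r lam (k + (n+1)) p₀) ≤ ∑' k : ℕ, g r lam n p₀ * q ^ (k+1) :=
      Summable.tsum_le_tsum hgeo hsum' hgsum
    have hval : (∑' k : ℕ, g r lam n p₀ * q ^ (k+1)) = g r lam n p₀ * q * (1 - q)⁻¹ := by
      have hc : ∀ k : ℕ, g r lam n p₀ * q ^ (k+1) = (g r lam n p₀ * q) * q ^ k :=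
        fun k => by ring
      rw [tsum_congr hc, tsum_mul_left, tsum_geometric_of_lt_one hq0 hq1]
    have h1q : 1 - q = p₀ * ((n:ℝ) + 1 + r * lam) / (r + ((n:ℝ)+1) * p₀) := by
      rw [hq]
      field_simp
      ring
    have hfin : g r lam n p₀ * q * (1 - q)⁻¹
        < g r lam n p₀ * (a / (((n : ℝ) + r * lam) * p₀)) := by
      have hd1 : (0:ℝ) < p₀ * ((n:ℝ) + 1 + r * lam) := by positivity
      have hd2 : (0:ℝ) < ((n:ℝ) + r * lam) * p₀ := by
        have : (0:ℝ) < (n:ℝ) := by exact_mod_cast hn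
        positivity
      have hqval : q * (1 - q)⁻¹ = a / (p₀ * ((n:ℝ) + 1 + r * lam)) := by
        rw [h1q, hq]
        field_simp
      rw [mul_assoc, hqval]
      apply mul_lt_mul_of_pos_left _ (hgpos n)
      apply div_lt_div_of_pos_left ha0 hd2
      nlinarith [mul_pos hr hl0, hp0]
    calc (∑' k : ℕ, g r lam (k + (n+1)) p₀) ≤ g r lam n p₀ * q * (1 - q)⁻¹ := by
          rw [← hval]; exact hle
      _ < _ := hfin
end

section
/- For every r > 0, λ ∈ (0,1) and p₀ ∈ (0,1], the identity Σ_{i=0}^∞ i · g_i(p₀) = r − r·λ·Σ_{i=0}^∞ g_i(p₀) holds, i.e., Σ_{i=0}^∞ i·g_i(p₀) = r − rλ·f(p₀). -/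
open scoped BigOperators

set_option maxHeartbeats 1000000 in
theorem stmt8 (r lam p₀ : ℝ) (hr : 0 < r) (hlam : lam ∈ Set.Ioo (0:ℝ) 1)
    (hp : p₀ ∈ Set.Ioc (0:ℝ) 1) :
    ∑' i : ℕ, (i : ℝ) * g r lam i p₀ = r - r * lam * f r lam p₀ := by
  obtain ⟨hl, hl1⟩ := hlam
  obtain ⟨hx, hx1⟩ := hp
  have h1 : 0 < 1 - lam * p₀ := by nlinarith
  have gpos : ∀ i, 0 < g r lam i p₀ := by
    intro i
    unfold g
    apply div_pos
    · exact mul_pos (mul_pos hx (pow_pos hr i)) (pow_pos h1 i)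
    · exact Finset.prod_pos fun j hj => by positivity
  -- recurrence
  have key : ∀ i : ℕ, (r + ((i:ℝ)+1) * p₀) * g r lam (i+1) p₀
      = r * (1 - lam * p₀) * g r lam i p₀ := by
    intro i
    unfold g
    rw [Finset.prod_Icc_succ_top (Nat.le_add_left 1 i)]
    have hD : (∏ j ∈ Finset.Icc 1 i, (r + (j : ℝ) * p₀)) ≠ 0 :=
      ne_of_gt (Finset.prod_pos fun j hj => by positivity)
    have hE : r + ((i:ℝ)+1) * p₀ ≠ 0 := by positivity
    push_cast
    field_simp
    ring
  -- ratio bound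
  set q := r * (1 - lam * p₀) with hq
  have hqpos : 0 < q := mul_pos hr h1
  have ratio : ∀ i : ℕ, g r lam (i+1) p₀ = q / (r + ((i:ℝ)+1) * p₀) * g r lam i p₀ := by
    intro i
    have hE : (0:ℝ) < r + ((i:ℝ)+1) * p₀ := by positivity
    field_simp
    linarith [key i]
  obtain ⟨N, hN⟩ := exists_nat_ge ((4*q) / p₀)
  have hbound : ∀ n : ℕ, N ≤ n → q / (r + ((n:ℝ)+1) * p₀) ≤ 1/4 := by
    intro n hn
    have hE : (0:ℝ) < r + ((n:ℝ)+1) * p₀ := by positivity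
    rw [div_le_iff₀ hE]
    have h4 : 4 * q ≤ (N:ℝ) * p₀ := by
      rw [div_le_iff₀ hx] at hN; linarith
    have : (N:ℝ) ≤ n := Nat.cast_le.mpr hn
    nlinarith
  have Sg : Summable (fun i => g r lam i p₀) := by
    apply summable_of_ratio_norm_eventually_le (by norm_num : (1:ℝ)/2 < 1)
    filter_upwards [Filter.eventually_ge_atTop N] with n hn
    rw [Real.norm_of_nonneg (gpos (n+1)).le, Real.norm_of_nonneg (gpos n).le, ratio n]
    have := hbound n hn
    nlinarith [gpos n]
  have ST : Summable (fun i : ℕ => (i:ℝ) * g r lam i p₀) := by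
    apply summable_of_ratio_norm_eventually_le (by norm_num : (1:ℝ)/2 < 1)
    filter_upwards [Filter.eventually_ge_atTop (max N 1)] with n hn
    have hn1 : 1 ≤ n := le_of_max_le_right hn
    have hnN : N ≤ n := le_of_max_le_left hn
    have hn1' : (1:ℝ) ≤ n := Nat.one_le_cast.mpr hn1
    rw [Real.norm_of_nonneg (mul_nonneg (Nat.cast_nonneg _) (gpos (n+1)).le),
      Real.norm_of_nonneg (mul_nonneg (Nat.cast_nonneg _) (gpos n).le), ratio n]
    push_cast
    have hb := hbound n hnN
    have hg := gpos n
    have hrat : ((n:ℝ)+1) ≤ 2 * n := by linarith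
    have hq' : 0 ≤ q / (r + ((n:ℝ)+1) * p₀) := by positivity
    calc ((n:ℝ)+1) * (q / (r + ((n:ℝ)+1) * p₀) * g r lam n p₀)
        ≤ 2 * (n:ℝ) * (1/4 * g r lam n p₀) := by
          apply mul_le_mul hrat _ (by positivity) (by positivity)
          exact mul_le_mul_of_nonneg_right hb hg.le
      _ = 1/2 * ((n:ℝ) * g r lam n p₀) := by ring
  -- shifted summability
  have Sg1 : Summable (fun i : ℕ => g r lam (i+1) p₀) := (summable_nat_add_iff 1).mpr Sg
  have ST1 : Summable (fun i : ℕ => ((i:ℝ)+1) * g r lam (i+1) p₀) := by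
    have := (summable_nat_add_iff 1).mpr ST
    simpa [Nat.cast_add] using this
  -- g 0 = p₀
  have g0 : g r lam 0 p₀ = p₀ := by simp [g]
  have hf : f r lam p₀ = p₀ + ∑' i : ℕ, g r lam (i+1) p₀ := by
    rw [f, Summable.tsum_eq_zero_add Sg, g0]
  have hT : ∑' i : ℕ, (i:ℝ) * g r lam i p₀ = ∑' i : ℕ, ((i:ℝ)+1) * g r lam (i+1) p₀ := by
    rw [Summable.tsum_eq_zero_add ST]
    push_cast
    simp
  -- summed recurrence
  have hsum : r * (∑' i : ℕ, g r lam (i+1) p₀)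
      + p₀ * (∑' i : ℕ, ((i:ℝ)+1) * g r lam (i+1) p₀) = q * f r lam p₀ := by
    have e1 : ∑' i : ℕ, (r + ((i:ℝ)+1) * p₀) * g r lam (i+1) p₀ = q * f r lam p₀ := by
      simp_rw [key]
      rw [tsum_mul_left, f, Summable.tsum_eq_zero_add Sg, g0]
    rw [← e1]
    rw [← tsum_mul_left, ← tsum_mul_left, ← Summable.tsum_add (Sg1.mul_left r) (ST1.mul_left p₀)]
    congr 1
    funext i
    ring
  set S1 := ∑' i : ℕ, g r lam (i+1) p₀
  set T1 := ∑' i : ℕ, ((i:ℝ)+1) * g r lam (i+1) p₀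
  rw [hT]
  have hfs : f r lam p₀ = p₀ + S1 := hf
  have : p₀ * T1 = p₀ * (r - r * lam * f r lam p₀) := by
    rw [hfs]
    rw [hq, hfs] at hsum
    linear_combination hsum
  exact mul_left_cancel₀ (ne_of_gt hx) this
end

section
/- Let r > 0, λ ∈ (0,1) and p̂₀ ∈ (0,1). Define p_0 = p̂₀ and p_j = r·q̂_{(0,j)}/j for j ≥ 1. Then the JIQ stationary distribution satisfies the local balance equations: (i) q̂_i · 1 = q̂_{i−1} · λ·p̂₀ for every i ≥ 2; (ii) q̂_{(0,j)} · λ(p̂₀ + r/j) = q̂_1 · p_{j−1} for every j ≥ 1; (iii) q̂_{(0,j)} · λ(j−1)(p̂₀ + r/j) = q̂_{(0,j−1)} · r·q̂_1 for every j ≥ 2. -/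
open scoped BigOperators

/-- `q̂_{(0,i)} = i·p̂₀·r^{i−1}(1−λp̂₀)^i / ∏_{j=1}^i (r + j·p̂₀)` for `i ≥ 1`. -/
noncomputable def qIdle (r lam p₀ : ℝ) (i : ℕ) : ℝ :=
  (i : ℝ) * p₀ * r ^ (i - 1) * (1 - lam * p₀) ^ i / ∏ j ∈ Finset.Icc 1 i, (r + (j : ℝ) * p₀)

/-- `q̂_i = p̂₀^{i−1} λ^i (1−λp̂₀)` for `i ≥ 1`. -/
noncomputable def qLen (lam p₀ : ℝ) (i : ℕ) : ℝ := p₀ ^ (i - 1) * lam ^ i * (1 - lam * p₀)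

/-- The fraction of I-queues of size `j`: `p_0 = p̂₀` and `p_j = r·q̂_{(0,j)}/j` for `j ≥ 1`. -/
noncomputable def pIQ (r lam p₀ : ℝ) (j : ℕ) : ℝ :=
  if j = 0 then p₀ else r * qIdle r lam p₀ j / (j : ℝ)

theorem stmt10 (r lam p₀ : ℝ) (hr : 0 < r) (hlam : lam ∈ Set.Ioo (0:ℝ) 1)
    (hp : p₀ ∈ Set.Ioo (0:ℝ) 1) :
    (∀ i : ℕ, 2 ≤ i → qLen lam p₀ i * 1 = qLen lam p₀ (i - 1) * (lam * p₀)) ∧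
      (∀ j : ℕ, 1 ≤ j →
        qIdle r lam p₀ j * (lam * (p₀ + r / (j : ℝ))) = qLen lam p₀ 1 * pIQ r lam p₀ (j - 1)) ∧
      (∀ j : ℕ, 2 ≤ j →
        qIdle r lam p₀ j * (lam * ((j : ℝ) - 1) * (p₀ + r / (j : ℝ))) =
          qIdle r lam p₀ (j - 1) * (r * qLen lam p₀ 1)) := by
  obtain ⟨hp0, _⟩ := hp
  have hprod : ∀ n : ℕ, (0:ℝ) < ∏ j ∈ Finset.Icc 1 n, (r + (j : ℝ) * p₀) := by
    intro n
    apply Finset.prod_pos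
    intro j _
    positivity
  refine ⟨?_, ?_, ?_⟩
  · intro i hi
    obtain ⟨k, rfl⟩ : ∃ k, i = k + 2 := ⟨i - 2, by omega⟩
    simp only [qLen, Nat.add_sub_cancel, show k + 2 - 1 = k + 1 from rfl]
    ring
  · intro j hj
    rcases Nat.eq_or_lt_of_le hj with h1 | h1
    · subst h1
      simp only [qIdle, qLen, pIQ]
      norm_num
      have h : p₀ + r ≠ 0 := by positivity
      field_simp
      ring
    · obtain ⟨k, rfl⟩ : ∃ k, j = k + 2 := ⟨j - 2, by omega⟩
      have hptop : (∏ j ∈ Finset.Icc 1 (k+2), (r + (j : ℝ) * p₀)) =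
          (∏ j ∈ Finset.Icc 1 (k+1), (r + (j : ℝ) * p₀)) * (r + ((k:ℝ)+2) * p₀) := by
        rw [Finset.prod_Icc_succ_top (by omega)]
        congr 1 <;> push_cast <;> ring
      have h1 := hprod (k+1)
      have h2 : (0:ℝ) < r + ((k:ℝ)+2) * p₀ := by positivity
      simp only [qIdle, qLen, pIQ, Nat.add_sub_cancel, show k + 2 - 1 = k + 1 from rfl,
        show k + 1 ≠ 0 by omega, if_false, hptop]
      have hk1 : ((k:ℝ)+1) ≠ 0 := by positivity
      have hk2 : ((k:ℝ)+2) ≠ 0 := by positivity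
      push_cast
      field_simp
      ring
  · intro j hj
    obtain ⟨k, rfl⟩ : ∃ k, j = k + 2 := ⟨j - 2, by omega⟩
    have hptop : (∏ j ∈ Finset.Icc 1 (k+2), (r + (j : ℝ) * p₀)) =
        (∏ j ∈ Finset.Icc 1 (k+1), (r + (j : ℝ) * p₀)) * (r + ((k:ℝ)+2) * p₀) := by
      rw [Finset.prod_Icc_succ_top (by omega)]
      congr 1 <;> push_cast <;> ring
    have h1 := hprod (k+1)
    have h2 : (0:ℝ) < r + ((k:ℝ)+2) * p₀ := by positivity
    simp only [qIdle, qLen, Nat.add_sub_cancel, show k + 2 - 1 = k + 1 from rfl, hptop]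
    have hk2 : ((k:ℝ)+2) ≠ 0 := by positivity
    push_cast
    field_simp
    ring
end

section
/- For every λ ∈ (0,1) and p̂₀ ∈ (0,1), setting q̂_0 = 1 − λ and q̂_i = p̂₀^{i−1} λ^i (1−λp̂₀) for i ≥ 1, the expected task response time under JIQ satisfies (1 − p̂₀) + p̂₀ · Σ_{i=0}^∞ (i+1)·q̂_i = 1/(1 − p̂₀λ); in particular the series Σ_{i=0}^∞ (i+1)·q̂_i converges. -/
/-- JIQ stationary queue-length distribution: `q̂_0 = 1 − λ` and
`q̂_i = p̂₀^{i−1} λ^i (1−λp̂₀)` for `i ≥ 1`. -/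
noncomputable def qhat (lam p₀ : ℝ) (i : ℕ) : ℝ :=
  if i = 0 then 1 - lam else p₀ ^ (i - 1) * lam ^ i * (1 - lam * p₀)

theorem stmt12 (lam p₀ : ℝ) (hlam : lam ∈ Set.Ioo (0:ℝ) 1) (hp : p₀ ∈ Set.Ioo (0:ℝ) 1) :
    Summable (fun i : ℕ => ((i : ℝ) + 1) * qhat lam p₀ i) ∧
      (1 - p₀) + p₀ * ∑' i : ℕ, ((i : ℝ) + 1) * qhat lam p₀ i = 1 / (1 - p₀ * lam) := by
  obtain ⟨hl0, hl1⟩ := hlam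
  obtain ⟨hp0, hp1⟩ := hp
  set x : ℝ := p₀ * lam with hxdef
  have hx0 : 0 < x := mul_pos hp0 hl0
  have hx1 : x < 1 := by
    calc x < 1 * 1 := by
          apply mul_lt_mul' hp1.le hl1 hl0.le one_pos
    _ = 1 := by ring
  have hxne : (1 : ℝ) - x ≠ 0 := by linarith
  have hxnorm : ‖x‖ < 1 := by rw [Real.norm_eq_abs, abs_of_pos hx0]; exact hx1
  set f : ℕ → ℝ := fun i => ((i : ℝ) + 1) * qhat lam p₀ i with hf
  have hshift : ∀ k : ℕ, f (k + 1) =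
      (lam * (1 - lam * p₀)) * ((k : ℝ) * x ^ k) + (2 * lam * (1 - lam * p₀)) * x ^ k := by
    intro k
    have : qhat lam p₀ (k + 1) = p₀ ^ k * lam ^ (k + 1) * (1 - lam * p₀) := by
      simp [qhat]
    simp only [hf, this]
    have hxk : x ^ k = p₀ ^ k * lam ^ k := by rw [hxdef, mul_pow]
    rw [hxk]
    push_cast
    ring
  have hs1 : Summable (fun k : ℕ => (k : ℝ) * x ^ k) := by
    have := summable_pow_mul_geometric_of_norm_lt_one 1 hxnorm (R := ℝ)
    simpa using this
  have hs2 : Summable (fun k : ℕ => x ^ k) := summable_geometric_of_lt_one hx0.le hx1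
  have hsum' : Summable (fun k : ℕ => f (k + 1)) := by
    simp only [hshift]
    exact ((hs1.mul_left _).add (hs2.mul_left _))
  have hsum : Summable f := (summable_nat_add_iff 1).mp hsum'
  refine ⟨hsum, ?_⟩
  have ht1 : ∑' k : ℕ, x ^ k = (1 - x)⁻¹ := tsum_geometric_of_lt_one hx0.le hx1
  have ht2 : ∑' k : ℕ, (k : ℝ) * x ^ k = x / (1 - x) ^ 2 :=
    tsum_coe_mul_geometric_of_norm_lt_one hxnorm
  have htail : ∑' k : ℕ, f (k + 1) =
      (lam * (1 - lam * p₀)) * (x / (1 - x) ^ 2) + (2 * lam * (1 - lam * p₀)) * (1 - x)⁻¹ := by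
    calc ∑' k : ℕ, f (k + 1)
        = ∑' k : ℕ, ((lam * (1 - lam * p₀)) * ((k : ℝ) * x ^ k)
            + (2 * lam * (1 - lam * p₀)) * x ^ k) := by
          exact tsum_congr hshift
      _ = (lam * (1 - lam * p₀)) * (∑' k : ℕ, (k : ℝ) * x ^ k)
            + (2 * lam * (1 - lam * p₀)) * ∑' k : ℕ, x ^ k := by
          rw [Summable.tsum_add (hs1.mul_left _) (hs2.mul_left _), tsum_mul_left, tsum_mul_left]
      _ = _ := by rw [ht1, ht2]
  have h0 : f 0 = 1 - lam := by simp [hf, qhat]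
  have hsplit : ∑' i : ℕ, f i = f 0 + ∑' k : ℕ, f (k + 1) := by
    exact (Summable.tsum_eq_zero_add hsum)
  rw [show (∑' i : ℕ, ((i : ℝ) + 1) * qhat lam p₀ i) = ∑' i : ℕ, f i from rfl, hsplit, h0, htail]
  have hlpx : 1 - lam * p₀ = 1 - x := by rw [hxdef]; ring
  rw [hlpx]
  field_simp
  ring
end

section
/- For every integer d ≥ 2, every λ, p̂₀ ∈ (0,1) and every integer i ≥ 1, the JIQ-Po(d) tail is no larger than the JIQ tail: λ^{σ(i)} · p̂₀^{σ(i−1)} ≤ λ^i · p̂₀^{i−1}, where σ(i) = Σ_{k=0}^{i−1} d^k; moreover the inequality is strict for i ≥ 2. -/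
open scoped BigOperators

/-- `σ(i) = Σ_{k=0}^{i−1} d^k = (d^i − 1)/(d−1)`. -/
def sigma' (d i : ℕ) : ℕ := ∑ k ∈ Finset.range i, d ^ k

/-- JIQ-Po(d) stationary tail distribution: `ŝ_i = λ^{σ(i)} p̂₀^{σ(i−1)}` (so `ŝ_0 = 1`). -/
noncomputable def shat (d : ℕ) (lam p₀ : ℝ) (i : ℕ) : ℝ :=
  lam ^ sigma' d i * p₀ ^ sigma' d (i - 1)

lemma sigma'_ge (d i : ℕ) (hd : 1 ≤ d) : i ≤ sigma' d i := by
  calc i = ∑ k ∈ Finset.range i, 1 := by simp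
  _ ≤ sigma' d i := Finset.sum_le_sum fun k _ => Nat.one_le_pow _ _ hd

lemma sigma'_gt (d i : ℕ) (hd : 2 ≤ d) (hi : 2 ≤ i) : i < sigma' d i := by
  have hm : 1 ∈ Finset.range i := Finset.mem_range.mpr (by omega)
  have he : sigma' d i = d ^ 1 + ∑ k ∈ (Finset.range i).erase 1, d ^ k :=
    (Finset.add_sum_erase _ _ hm).symm
  have hc : ((Finset.range i).erase 1).card = i - 1 := by
    rw [Finset.card_erase_of_mem hm, Finset.card_range]
  have hg : i - 1 ≤ ∑ k ∈ (Finset.range i).erase 1, d ^ k := by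
    calc i - 1 = ∑ _k ∈ (Finset.range i).erase 1, 1 := by simp [hc]
    _ ≤ _ := Finset.sum_le_sum fun k _ => Nat.one_le_pow _ _ (by omega)
  simp only [pow_one] at he
  omega

theorem stmt16 (d : ℕ) (hd : 2 ≤ d) (lam p₀ : ℝ)
    (hlam : lam ∈ Set.Ioo (0:ℝ) 1) (hp : p₀ ∈ Set.Ioo (0:ℝ) 1)
    (i : ℕ) (hi : 1 ≤ i) :
    lam ^ sigma' d i * p₀ ^ sigma' d (i - 1) ≤ lam ^ i * p₀ ^ (i - 1) ∧
      (2 ≤ i → lam ^ sigma' d i * p₀ ^ sigma' d (i - 1) < lam ^ i * p₀ ^ (i - 1)) := by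
  obtain ⟨hl0, hl1⟩ := hlam
  obtain ⟨hp0, hp1⟩ := hp
  have h1 : lam ^ sigma' d i ≤ lam ^ i :=
    pow_le_pow_of_le_one hl0.le hl1.le (sigma'_ge d i (by omega))
  have h2 : p₀ ^ sigma' d (i - 1) ≤ p₀ ^ (i - 1) :=
    pow_le_pow_of_le_one hp0.le hp1.le (sigma'_ge d (i-1) (by omega))
  constructor
  · exact mul_le_mul h1 h2 (pow_pos hp0 _).le (pow_pos hl0 _).le
  · intro h2i
    have h1' : lam ^ sigma' d i < lam ^ i :=
      pow_lt_pow_right_of_lt_one₀ hl0 hl1 (sigma'_gt d i hd h2i)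
    exact mul_lt_mul h1' h2 (pow_pos hp0 _) (pow_pos hl0 _).le
end

section
/- Let r > 0, λ ∈ (0,1) and p₀ ∈ (0,1). If there exists an integer k ≥ 1 such that the derivative of g_k at p₀ is negative, then for every integer i ≥ k the derivative of g_i at p₀ is negative. -/
open scoped BigOperators

theorem stmt17 (r lam p₀ : ℝ) (hr : 0 < r) (hlam : lam ∈ Set.Ioo (0:ℝ) 1)
    (hp : p₀ ∈ Set.Ioo (0:ℝ) 1) (k : ℕ) (hk : 1 ≤ k)
    (hneg : deriv (g r lam k) p₀ < 0) :
    ∀ i : ℕ, k ≤ i → deriv (g r lam i) p₀ < 0 := by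
  obtain ⟨hl0, hl1⟩ := hlam
  obtain ⟨hp0, hp1⟩ := hp
  have h1 : 0 < 1 - lam * p₀ := by nlinarith
  have hgpos : ∀ n : ℕ, 0 < g r lam n p₀ := by
    intro n
    have hP : 0 < ∏ j ∈ Finset.Icc 1 n, (r + (j : ℝ) * p₀) :=
      Finset.prod_pos fun j _ => by positivity
    unfold g
    positivity
  intro i hi
  induction i with
  | zero => omega
  | succ n ih =>
    rcases Nat.lt_or_ge n k with hlt | hge
    · have hnk : n + 1 = k := by omega
      rw [hnk]; exact hneg
    · have hderiv := ih hge
      have hdiff : DifferentiableAt ℝ (g r lam n) p₀ :=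
        differentiableAt_of_deriv_ne_zero (ne_of_lt hderiv)
      set c : ℝ := (n : ℝ) + 1 with hc_def
      have hcpos : 0 < c := by positivity
      have hdenpos : 0 < r + c * p₀ := by positivity
      -- derivative of h x = r * (1 - lam * x) / (r + c * x)
      have hnum : HasDerivAt (fun x : ℝ => r * (1 - lam * x)) (r * (-lam)) p₀ := by
        have := (((hasDerivAt_id p₀).const_mul lam).const_sub 1).const_mul r
        simpa using this
      have hden : HasDerivAt (fun x : ℝ => r + c * x) c p₀ := by
        have := ((hasDerivAt_id p₀).const_mul c).const_add r
        simpa using this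
      have hh : HasDerivAt (fun x : ℝ => r * (1 - lam * x) / (r + c * x))
          ((r * (-lam) * (r + c * p₀) - r * (1 - lam * p₀) * c) / (r + c * p₀) ^ 2) p₀ :=
        hnum.div hden (ne_of_gt hdenpos)
      -- eventual equality
      have heq : g r lam (n + 1) =ᶠ[nhds p₀]
          fun x => g r lam n x * (r * (1 - lam * x) / (r + c * x)) := by
        filter_upwards [Ioo_mem_nhds hp0 hp1] with x hx
        obtain ⟨hx0, hx1⟩ := hx
        have hPx : (∏ j ∈ Finset.Icc 1 n, (r + (j : ℝ) * x)) ≠ 0 :=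
          ne_of_gt (Finset.prod_pos fun j _ => by positivity)
        have hcx : r + c * x ≠ 0 := by positivity
        unfold g
        rw [Finset.prod_Icc_succ_top (Nat.le_add_left 1 n)]
        push_cast
        rw [div_mul_div_comm]
        rw [div_eq_div_iff (by positivity) (by positivity)]
        ring
      have hmul : HasDerivAt (fun x => g r lam n x * (r * (1 - lam * x) / (r + c * x)))
          (deriv (g r lam n) p₀ * (r * (1 - lam * p₀) / (r + c * p₀)) +
            g r lam n p₀ *
              ((r * (-lam) * (r + c * p₀) - r * (1 - lam * p₀) * c) / (r + c * p₀) ^ 2)) p₀ :=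
        hdiff.hasDerivAt.mul hh
      rw [heq.deriv_eq, hmul.deriv]
      have hterm1 : deriv (g r lam n) p₀ * (r * (1 - lam * p₀) / (r + c * p₀)) < 0 :=
        mul_neg_of_neg_of_pos hderiv (by positivity)
      have hDneg : (r * (-lam) * (r + c * p₀) - r * (1 - lam * p₀) * c) / (r + c * p₀) ^ 2 < 0 := by
        apply div_neg_of_neg_of_pos _ (by positivity)
        nlinarith [mul_pos hr hcpos, mul_pos (mul_pos hr hl0) hr]
      have hterm2 := mul_neg_of_pos_of_neg (hgpos n) hDneg
      linarith
end

section
/- Let (a_i)_{i≥0} be a sequence of real numbers such that both (a_i) and (i·a_i) are summable, a_0 > 0, and there exists an integer k ≥ 1 with a_i ≥ 0 for all 1 ≤ i < k and a_i ≤ 0 for all i ≥ k. If there is a constant c > 0 with Σ_{i=0}^∞ i·a_i = −c · Σ_{i=0}^∞ a_i, then Σ_{i=0}^∞ a_i > 0. -/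
theorem stmt19 (a : ℕ → ℝ) (hsum : Summable a)
    (hsum' : Summable (fun i : ℕ => (i : ℝ) * a i)) (ha0 : 0 < a 0)
    (hk : ∃ k : ℕ, 1 ≤ k ∧ (∀ i : ℕ, 1 ≤ i → i < k → 0 ≤ a i) ∧ ∀ i : ℕ, k ≤ i → a i ≤ 0)
    (c : ℝ) (hc : 0 < c)
    (hid : ∑' i : ℕ, (i : ℝ) * a i = -c * ∑' i : ℕ, a i) :
    0 < ∑' i : ℕ, a i := by
  obtain ⟨k, hk1, hpos, hneg⟩ := hk
  have hkpos : (0:ℝ) < k := by exact_mod_cast hk1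
  have hle : ∀ i : ℕ, (i : ℝ) * a i ≤ (k : ℝ) * a i := by
    intro i
    rcases Nat.eq_zero_or_pos i with h0 | h1
    · subst h0; simp; positivity
    · rcases lt_or_ge i k with hik | hik
      · have : (i:ℝ) ≤ k := by exact_mod_cast hik.le
        exact mul_le_mul_of_nonneg_right this (hpos i h1 hik)
      · have h1 : (k:ℝ) ≤ i := by exact_mod_cast hik
        nlinarith [hneg i hik]
  have hlt : (fun i : ℕ => (i : ℝ) * a i) 0 < (fun i : ℕ => (k : ℝ) * a i) 0 := by
    simp; positivity
  have := Summable.tsum_lt_tsum hle hlt hsum' (hsum.mul_left (k:ℝ))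
  rw [hid, tsum_mul_left] at this
  nlinarith
end
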